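/- arXiv:1508.03932 — 5 statements merged into one kernel-verified Lean document; each statement's English description precedes it below -/
import Mathlib

section
/- Let α > 0 and let X = {(λ, m_λ)}_{λ∈Λ} be a divisor such that for every C > 0 there exists a compact subset K of ℂ with ⋃_{λ∈Λ, m_λ > αC²} D(λ, √(m_λ/α) − C) = ℂ \ K. Then there exists a subset Λ' of Λ such that: (i) for every C > 0 there is a compact subset K of ℂ with ⋃_{λ∈Λ', m_λ > αC²} D(λ, √(m_λ/α) − C) = ℂ \ K, and (ii) m_λ → +∞ as |λ| → ∞ along λ ∈ Λ'. -/
open Metric Set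

set_option maxHeartbeats 1000000

/-- If a divisor `X = (Λ, m)` is such that for every `C > 0` the discs
`D(λ, √(m_λ/α) − C)` over `λ ∈ Λ` with `m_λ > αC²` cover the complement of some compact
set, then there is a subset `Λ' ⊆ Λ` with the same covering property and such that
`m_λ → ∞` as `|λ| → ∞` along `Λ'`. -/
theorem stmt2 (α : ℝ) (hα : 0 < α) (Λ : Set ℂ) (m : ℂ → ℕ)
    (hΛ : Λ.Countable) (hm : ∀ lam ∈ Λ, 1 ≤ m lam)
    (hcov : ∀ C : ℝ, 0 < C → ∃ K : Set ℂ, IsCompact K ∧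
      (⋃ lam ∈ {l ∈ Λ | α * C ^ 2 < (m l : ℝ)},
        ball lam (Real.sqrt ((m lam : ℝ) / α) - C)) = Kᶜ) :
    ∃ Λ' ⊆ Λ,
      (∀ C : ℝ, 0 < C → ∃ K : Set ℂ, IsCompact K ∧
        (⋃ lam ∈ {l ∈ Λ' | α * C ^ 2 < (m l : ℝ)},
          ball lam (Real.sqrt ((m lam : ℝ) / α) - C)) = Kᶜ) ∧
      (∀ n : ℕ, ∃ R : ℝ, ∀ lam ∈ Λ', R ≤ ‖lam‖ → n ≤ m lam) := by
  classical
  -- choose compact sets for integer levels `C = j + 2`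
  have hcov' : ∀ j : ℕ, ∃ K : Set ℂ, IsCompact K ∧
      (⋃ lam ∈ {l ∈ Λ | α * ((j : ℝ) + 2) ^ 2 < (m l : ℝ)},
        ball lam (Real.sqrt ((m lam : ℝ) / α) - ((j : ℝ) + 2))) = Kᶜ :=
    fun j => hcov ((j : ℝ) + 2) (by positivity)
  choose K hK hU using hcov'
  have hρex : ∀ j : ℕ, ∃ r : ℝ, K j ⊆ ball 0 r := fun j => (hK j).isBounded.subset_ball 0
  choose ρ hρ using hρex
  -- an increasing sequence of radii
  obtain ⟨T, hT0, hTs⟩ : ∃ T : ℕ → ℝ, T 0 = 0 ∧ ∀ j, T (j + 1) = max (T j + 1) (ρ j + 1) :=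
    ⟨fun n => Nat.rec 0 (fun j t => max (t + 1) (ρ j + 1)) n, rfl, fun _ => rfl⟩
  have hTgap : ∀ j, T j + 1 ≤ T (j + 1) := fun j => (hTs j) ▸ le_max_left _ _
  have hTρ : ∀ j, ρ j + 1 ≤ T (j + 1) := fun j => (hTs j) ▸ le_max_right _ _
  have hTadd : ∀ i k : ℕ, T i + k ≤ T (i + k) := by
    intro i k
    induction k with
    | zero => simp
    | succ k ih =>
      have h1 := hTgap (i + k)
      push_cast
      push_cast at ih
      have : i + (k + 1) = (i + k) + 1 := by omega
      rw [this]
      linarith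
  have hTge : ∀ j : ℕ, (j : ℝ) ≤ T j := by
    intro j
    have := hTadd 0 j
    simpa [hT0] using this
  -- the selected subset
  set Λ' : Set ℂ := {l ∈ Λ | ∀ j : ℕ, T (j + 1) ≤ ‖l‖ → α * (j : ℝ) ^ 2 < m l}
    with hΛ'def
  refine ⟨Λ', fun l hl => hl.1, ?_, ?_⟩
  · -- covering property
    intro C hC
    set N : ℕ := ⌈C⌉₊ with hNdef
    set U : Set ℂ := ⋃ lam ∈ {l ∈ Λ' | α * C ^ 2 < (m l : ℝ)},
        ball lam (Real.sqrt ((m lam : ℝ) / α) - C) with hUdef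
    have hUopen : IsOpen U := isOpen_biUnion fun _ _ => isOpen_ball
    have key : ∀ z : ℂ, T (N + 1) ≤ ‖z‖ → z ∈ U := by
      intro z hz
      set B : ℕ := ⌈‖z‖⌉₊ with hBdef
      set n : ℕ := Nat.findGreatest (fun j => T (j + 1) ≤ ‖z‖) B with hndef
      have hzB : ‖z‖ ≤ (B : ℝ) := Nat.le_ceil _
      have hNB : N ≤ B := by
        have h1 : ((N : ℝ) + 1) ≤ T (N + 1) := by
          have := hTge (N + 1); push_cast at this; linarith
        have h2 : (N : ℝ) ≤ (B : ℝ) := by linarith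
        exact_mod_cast h2
      have hNn : N ≤ n := Nat.le_findGreatest hNB hz
      have hn1 : T (n + 1) ≤ ‖z‖ :=
        Nat.findGreatest_spec (P := fun j => T (j + 1) ≤ ‖z‖) hNB hz
      have hn2 : ‖z‖ < T (n + 2) := by
        by_cases hb : n + 1 ≤ B
        · have := Nat.findGreatest_is_greatest (n := B)
            (P := fun j => T (j + 1) ≤ ‖z‖) (Nat.lt_succ_self n) hb
          simpa using not_le.mp this
        · have hBn : (B : ℝ) ≤ (n : ℝ) := by exact_mod_cast Nat.lt_succ_iff.mp (not_le.mp hb)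
          have := hTge (n + 2)
          push_cast at this
          linarith
      -- `z` is not in `K n`
      have hzK : z ∉ K n := by
        intro hzk
        have := hρ n hzk
        simp only [mem_ball, dist_zero_right] at this
        have h1 := hTρ n
        have : ‖z‖ < ρ n := by simpa using this
        linarith
      have hzU : z ∈ ⋃ lam ∈ {l ∈ Λ | α * ((n : ℝ) + 2) ^ 2 < (m l : ℝ)},
          ball lam (Real.sqrt ((m lam : ℝ) / α) - ((n : ℝ) + 2)) := by
        rw [hU n]; exact hzK
      simp only [mem_iUnion, exists_prop, mem_sep_iff] at hzU
      obtain ⟨lam, ⟨hlamΛ, hlamm⟩, hzball⟩ := hzU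
      rw [mem_ball] at hzball
      have hsq0 : 0 ≤ (m lam : ℝ) / α := by positivity
      have hsqrt : Real.sqrt ((m lam : ℝ) / α) ^ 2 = (m lam : ℝ) / α := Real.sq_sqrt hsq0
      have hCN : C ≤ (N : ℝ) := Nat.le_ceil C
      have hNnR : (N : ℝ) ≤ (n : ℝ) := by exact_mod_cast hNn
      have hCn2 : C ≤ (n : ℝ) + 2 := by linarith
      -- `lam` belongs to `Λ'`
      have hlamΛ' : lam ∈ Λ' := by
        refine ⟨hlamΛ, ?_⟩
        intro j hj
        by_cases hjle : (j : ℝ) ≤ (n : ℝ) + 2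
        · have hj2 : (j : ℝ) ^ 2 ≤ ((n : ℝ) + 2) ^ 2 := by nlinarith [(Nat.cast_nonneg j : (0:ℝ) ≤ (j:ℝ))]
          have := mul_le_mul_of_nonneg_left hj2 hα.le
          linarith
        · push_neg at hjle
          have hjn : n + 2 ≤ j := by
            have h' : ((n + 2 : ℕ) : ℝ) < (j : ℝ) := by push_cast; linarith
            exact_mod_cast h'.le
          -- distance estimates
          have hdisz : ‖lam‖ - ‖z‖ ≤ dist z lam := by
            rw [dist_comm, dist_eq_norm]
            simpa using norm_sub_norm_le lam z
          have hTj : T (n + 2) + ((j : ℝ) - (n : ℝ) - 1) ≤ T (j + 1) := by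
            have h1 := hTadd (n + 2) (j - (n + 1))
            have h2 : (n + 2) + (j - (n + 1)) = j + 1 := by omega
            rw [h2] at h1
            have h3 : ((j - (n + 1) : ℕ) : ℝ) = (j : ℝ) - (n : ℝ) - 1 := by
              have : (n + 1 : ℕ) ≤ j := by omega
              push_cast [Nat.cast_sub this]
              ring
            rw [h3] at h1
            exact h1
          have hlamlb : T (n + 2) + ((j : ℝ) - (n : ℝ) - 1) ≤ ‖lam‖ :=
            le_trans hTj hj
          have hbig : (j : ℝ) + 1 < Real.sqrt ((m lam : ℝ) / α) := by
            have : ‖lam‖ - ‖z‖ < Real.sqrt ((m lam : ℝ) / α)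
                - ((n : ℝ) + 2) := lt_of_le_of_lt hdisz hzball
            linarith
          have hj0 : (0 : ℝ) ≤ (j : ℝ) := Nat.cast_nonneg j
          have h4 : ((j : ℝ) + 1) ^ 2 < (m lam : ℝ) / α := by
            rw [← hsqrt]
            exact pow_lt_pow_left₀ hbig (by positivity) two_ne_zero
          have h5 : (j : ℝ) ^ 2 < (m lam : ℝ) / α := by nlinarith
          rw [lt_div_iff₀ hα] at h5
          nlinarith [h5]
      -- conclude membership in `U`
      have hmC : α * C ^ 2 < (m lam : ℝ) := by
        have hC2 : C ^ 2 ≤ ((n : ℝ) + 2) ^ 2 := by nlinarith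
        have := mul_le_mul_of_nonneg_left hC2 hα.le
        linarith
      rw [hUdef]
      simp only [mem_iUnion, exists_prop, mem_sep_iff]
      refine ⟨lam, ⟨hlamΛ', hmC⟩, ?_⟩
      rw [mem_ball]
      linarith
    refine ⟨Uᶜ, ?_, (compl_compl U).symm⟩
    have hclosed : IsClosed Uᶜ := hUopen.isClosed_compl
    have hbdd : Uᶜ ⊆ closedBall 0 (T (N + 1)) := by
      intro z hzc
      by_contra hzb
      simp only [mem_closedBall, dist_zero_right, not_le] at hzb
      exact hzc (key z hzb.le)
    exact (isCompact_closedBall (0 : ℂ) (T (N + 1))).of_isClosed_subset hclosed hbdd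
  · -- multiplicities tend to infinity
    intro n
    set c : ℕ := ⌈α⁻¹⌉₊ with hcdef
    have hc1 : 1 ≤ c := Nat.one_le_ceil_iff.mpr (by positivity)
    have hαc : 1 ≤ α * (c : ℝ) := by
      have h1 : α⁻¹ ≤ (c : ℝ) := Nat.le_ceil _
      calc (1 : ℝ) = α * α⁻¹ := (mul_inv_cancel₀ hα.ne').symm
        _ ≤ α * c := by nlinarith
    set n' : ℕ := c * (n + 1) with hn'def
    refine ⟨T (n' + 1), ?_⟩
    intro lam hlam hR
    have h1 : α * (n' : ℝ) ^ 2 < m lam := hlam.2 n' hR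
    have h2 : (n : ℝ) < m lam := by
      have hcR : (1 : ℝ) ≤ (c : ℝ) := by exact_mod_cast hc1
      have hn'R : (n' : ℝ) = (c : ℝ) * ((n : ℝ) + 1) := by push_cast [hn'def]; ring
      have hn0 : (0 : ℝ) ≤ (n : ℝ) := Nat.cast_nonneg n
      have s0 : (0 : ℝ) ≤ (c : ℝ) * ((n : ℝ) + 1) ^ 2 := by positivity
      have s1 : ((n : ℝ) + 1) ^ 2 ≤ (c : ℝ) * ((n : ℝ) + 1) ^ 2 := by
        nlinarith [sq_nonneg ((n : ℝ) + 1)]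
      have s2 : (c : ℝ) * ((n : ℝ) + 1) ^ 2 ≤ (α * (c : ℝ)) * ((c : ℝ) * ((n : ℝ) + 1) ^ 2) := by
        nlinarith [s0]
      have s3 : α * (n' : ℝ) ^ 2 = (α * (c : ℝ)) * ((c : ℝ) * ((n : ℝ) + 1) ^ 2) := by
        rw [hn'R]; ring
      have s4 : (n : ℝ) + 1 ≤ ((n : ℝ) + 1) ^ 2 := by nlinarith
      linarith [h1, s1, s2, s3.le, s3.ge, s4]
    exact_mod_cast h2.le
end

section
/- Let α > 0 and let X = {(λ, m_λ)}_{λ∈Λ} be a divisor. If X is a sampling divisor for F^∞_α, then there exists C > 0 such that ⋃_{λ∈Λ} D(λ, √(m_λ/α) + C) = ℂ. -/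
set_option maxHeartbeats 1000000


open MeasureTheory Metric Set
open scoped ENNReal NNReal

noncomputable section

/-- Membership in the Fock space `F^∞_α`: entire functions with
`sup_z |f(z)| e^{−(α/2)|z|²} < ∞`. -/
def MemFInf (α : ℝ) (f : ℂ → ℂ) : Prop :=
  Differentiable ℂ f ∧
    ∃ C : ℝ, ∀ z : ℂ, ‖f z‖ * Real.exp (-(α / 2) * ‖z‖ ^ 2) ≤ C

/-- The norm in `F^∞_α`. -/
def FInfNorm (α : ℝ) (f : ℂ → ℂ) : ℝ :=
  ⨆ z : ℂ, ‖f z‖ * Real.exp (-(α / 2) * ‖z‖ ^ 2)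

/-- Membership in `N^∞_{λ,n}`: the functions of `F^∞_α` vanishing at `λ` to order `n`. -/
def MemNInf (α : ℝ) (lam : ℂ) (n : ℕ) (f : ℂ → ℂ) : Prop :=
  MemFInf α f ∧ ∀ k < n, iteratedDeriv k f lam = 0

/-- The quotient norm `‖f‖_{F^∞_α / N^∞_{λ,n}} = inf {‖f − g‖ : g ∈ N^∞_{λ,n}}`. -/
def quotInf (α : ℝ) (lam : ℂ) (n : ℕ) (f : ℂ → ℂ) : ℝ :=
  sInf {c : ℝ | ∃ g : ℂ → ℂ, MemNInf α lam n g ∧ FInfNorm α (fun z => f z - g z) = c}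

/-- `X = (Λ, m)` is a sampling divisor for `F^∞_α`. -/
def SamplingFInf (α : ℝ) (Λ : Set ℂ) (m : ℂ → ℕ) : Prop :=
  ∃ L : ℝ, 0 < L ∧ ∀ f : ℂ → ℂ, MemFInf α f →
    FInfNorm α f ≤ L * ⨆ lam : Λ, quotInf α (lam : ℂ) (m (lam : ℂ)) f

/-- `X = (Λ, m)` is an interpolating divisor for `F^∞_α`: for every family
`(f_λ)` with uniformly bounded quotient norms there is `f ∈ F^∞_α` with
`f − f_λ ∈ N^∞_λ` for all `λ ∈ Λ`. -/
def InterpolatingFInf (α : ℝ) (Λ : Set ℂ) (m : ℂ → ℕ) : Prop :=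
  ∀ F : ℂ → ℂ → ℂ, (∀ lam ∈ Λ, MemFInf α (F lam)) →
    (∃ B : ℝ, ∀ lam ∈ Λ, quotInf α lam (m lam) (F lam) ≤ B) →
    ∃ f : ℂ → ℂ, MemFInf α f ∧
      ∀ lam ∈ Λ, MemNInf α lam (m lam) (fun z => f z - F lam z)

private lemma FInfNorm_nonneg (α : ℝ) (f : ℂ → ℂ) : 0 ≤ FInfNorm α f :=
  Real.iSup_nonneg fun z => by positivity

private lemma quotInf_nonneg (α : ℝ) (lam : ℂ) (n : ℕ) (f : ℂ → ℂ) :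
    0 ≤ quotInf α lam n f :=
  Real.sInf_nonneg fun c hc => by
    obtain ⟨g, _, rfl⟩ := hc; exact FInfNorm_nonneg _ _

/-- the normalized reproducing kernel at `z₀` -/
private def Ker (α : ℝ) (z₀ : ℂ) : ℂ → ℂ := fun z =>
  Complex.exp ((α : ℂ) * (starRingEnd ℂ) z₀ * z + ((-(α * Complex.normSq z₀) / 2 : ℝ) : ℂ))

private lemma Ker_diff (α : ℝ) (z₀ : ℂ) : Differentiable ℂ (Ker α z₀) :=
  ((differentiable_id.const_mul _).add_const _).cexp

private lemma Ker_weight (α : ℝ) (z₀ z : ℂ) :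
    ‖Ker α z₀ z‖ * Real.exp (-(α / 2) * ‖z‖ ^ 2)
      = Real.exp (-(α / 2) * ‖z - z₀‖ ^ 2) := by
  unfold Ker
  rw [Complex.norm_exp, ← Real.exp_add]
  congr 1
  simp only [Complex.add_re, Complex.mul_re, Complex.mul_im, Complex.ofReal_re,
    Complex.ofReal_im, Complex.conj_re, Complex.conj_im, Complex.sq_norm,
    Complex.normSq_apply, Complex.sub_re, Complex.sub_im]
  ring

private lemma Ker_mem (α : ℝ) (hα : 0 ≤ α) (z₀ : ℂ) : MemFInf α (Ker α z₀) := by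
  refine ⟨Ker_diff α z₀, 1, fun z => ?_⟩
  rw [Ker_weight]
  apply Real.exp_le_one_iff.mpr
  have := sq_nonneg (‖z - z₀‖)
  nlinarith

private lemma Ker_norm_ge (α : ℝ) (hα : 0 ≤ α) (z₀ : ℂ) : 1 ≤ FInfNorm α (Ker α z₀) := by
  have hb : BddAbove (Set.range fun z =>
      ‖Ker α z₀ z‖ * Real.exp (-(α / 2) * ‖z‖ ^ 2)) := by
    refine ⟨1, ?_⟩
    rintro _ ⟨z, rfl⟩
    simp only
    rw [Ker_weight]
    apply Real.exp_le_one_iff.mpr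
    have := sq_nonneg (‖z - z₀‖)
    nlinarith
  have h0 : ‖Ker α z₀ z₀‖ * Real.exp (-(α / 2) * ‖z₀‖ ^ 2) = 1 := by
    rw [Ker_weight]; simp
  rw [FInfNorm, ← h0]
  exact le_ciSup hb z₀

-- toolkit


private lemma entire_iteratedDeriv {f : ℂ → ℂ} (hf : Differentiable ℂ f) (n : ℕ) :
    Differentiable ℂ (iteratedDeriv n f) :=
  hf.contDiff.differentiable_iteratedDeriv n (by exact_mod_cast WithTop.coe_lt_top _)

private lemma entire_deriv {f : ℂ → ℂ} (hf : Differentiable ℂ f) :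
    Differentiable ℂ (deriv f) := by
  rw [← iteratedDeriv_one]; exact entire_iteratedDeriv hf 1

private lemma iterD_add {f g : ℂ → ℂ} (hf : Differentiable ℂ f) (hg : Differentiable ℂ g) :
    ∀ n : ℕ, iteratedDeriv n (fun z => f z + g z) = fun z => iteratedDeriv n f z + iteratedDeriv n g z := by
  intro n
  induction n generalizing f g with
  | zero => simp [iteratedDeriv_zero]
  | succ n ih =>
    rw [iteratedDeriv_succ', iteratedDeriv_succ', iteratedDeriv_succ']
    rw [show deriv (fun z => f z + g z) = fun z => deriv f z + deriv g z from
      funext fun z => deriv_add (hf z) (hg z)]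
    exact ih (entire_deriv hf) (entire_deriv hg)

private lemma iterD_const_mul {f : ℂ → ℂ} (hf : Differentiable ℂ f) (c : ℂ) :
    ∀ n : ℕ, iteratedDeriv n (fun z => c * f z) = fun z => c * iteratedDeriv n f z := by
  intro n
  induction n generalizing f with
  | zero => simp [iteratedDeriv_zero]
  | succ n ih =>
    rw [iteratedDeriv_succ', iteratedDeriv_succ']
    rw [show deriv (fun z => c * f z) = fun z => c * deriv f z from
      funext fun z => deriv_const_mul c (hf z)]
    exact ih (entire_deriv hf)

private lemma iterD_sum {ι : Type*} (s : Finset ι) {F : ι → ℂ → ℂ}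
    (hF : ∀ i ∈ s, Differentiable ℂ (F i)) (n : ℕ) :
    iteratedDeriv n (fun z => ∑ i ∈ s, F i z) = fun z => ∑ i ∈ s, iteratedDeriv n (F i) z := by
  classical
  induction s using Finset.induction with
  | empty =>
    simp only [Finset.sum_empty]
    induction n with
    | zero => simp [iteratedDeriv_zero]
    | succ n ih => rw [iteratedDeriv_succ', show deriv (fun _ : ℂ => (0:ℂ)) = fun _ => 0 from funext fun z => deriv_const z 0, ih]
  | @insert a s' hnot ih =>
    simp only [Finset.sum_insert hnot]
    rw [iterD_add (hF a (Finset.mem_insert_self a s'))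
      (Differentiable.fun_sum fun i hi => hF i (Finset.mem_insert_of_mem hi)),
      ih fun i hi => hF i (Finset.mem_insert_of_mem hi)]

private lemma iterD_mul_vanish {lam : ℂ} :
    ∀ (j : ℕ) (u v : ℂ → ℂ), Differentiable ℂ u → Differentiable ℂ v →
      (∀ k ≤ j, iteratedDeriv k v lam = 0) →
      iteratedDeriv j (fun z => u z * v z) lam = 0 := by
  intro j
  induction j with
  | zero =>
    intro u v hu hv h0
    have : v lam = 0 := by simpa [iteratedDeriv_zero] using h0 0 le_rfl
    simp [iteratedDeriv_zero, this]
  | succ j ih =>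
    intro u v hu hv h0
    rw [iteratedDeriv_succ']
    rw [show deriv (fun z => u z * v z) = fun z => deriv u z * v z + u z * deriv v z from
      funext fun z => deriv_fun_mul (hu z) (hv z)]
    rw [iterD_add ((entire_deriv hu).fun_mul hv) (hu.fun_mul (entire_deriv hv))]
    have h1 : iteratedDeriv j (fun z => deriv u z * v z) lam = 0 :=
      ih (deriv u) v (entire_deriv hu) hv fun k hk => h0 k (hk.trans j.le_succ)
    have h2 : iteratedDeriv j (fun z => u z * deriv v z) lam = 0 :=
      ih u (deriv v) hu (entire_deriv hv) fun k hk => by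
        have := h0 (k + 1) (Nat.succ_le_succ hk)
        rwa [iteratedDeriv_succ'] at this
    simp [h1, h2]

private lemma iterD_exp (c b : ℂ) :
    ∀ n : ℕ, iteratedDeriv n (fun z => Complex.exp (c * z + b)) =
      fun z => c ^ n * Complex.exp (c * z + b) := by
  intro n
  induction n with
  | zero => simp [iteratedDeriv_zero]
  | succ n ih =>
    rw [iteratedDeriv_succ, ih]
    funext z
    have hd : HasDerivAt (fun z => Complex.exp (c * z + b))
        (Complex.exp (c * z + b) * (c * 1)) z :=
      (((hasDerivAt_id z).const_mul c).add_const b).cexp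
    rw [deriv_const_mul _ hd.differentiableAt, hd.deriv]
    ring

private lemma iterD_monomial (lam : ℂ) :
    ∀ (k i : ℕ), iteratedDeriv k (fun z => (z - lam) ^ i) =
      fun z => (i.descFactorial k : ℂ) * (z - lam) ^ (i - k) := by
  intro k
  induction k with
  | zero => intro i; simp [iteratedDeriv_zero]
  | succ k ih =>
    intro i
    rw [iteratedDeriv_succ, ih i]
    funext z
    have hd : HasDerivAt (fun z => (z - lam) ^ (i - k))
        (((i - k : ℕ) : ℂ) * (z - lam) ^ (i - k - 1) * 1) z :=
      ((hasDerivAt_id z).sub_const lam).pow (i - k)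
    rw [deriv_const_mul _ hd.differentiableAt, hd.deriv,
      Nat.descFactorial_succ, Nat.sub_sub, Nat.add_comm k 1]
    push_cast
    ring

-- core estimate


private lemma core_est (m : ℕ) (hm : 1 ≤ m) (β γ x : ℝ) (hγ : 0 ≤ γ) (hx : 0 ≤ x)
    (hβ : Real.sqrt (m : ℝ) + Real.sqrt γ ≤ Real.sqrt β) :
    (∑ k ∈ Finset.range m, x ^ k / (k.factorial : ℝ)) *
      Real.exp (-x - (x - β) ^ 2 / (2 * β)) ≤ Real.exp (-γ / 25) := by
  set s := Real.sqrt β with hs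
  set t := Real.sqrt (m : ℝ) with ht
  set u := Real.sqrt γ with hu
  have hm1 : (1 : ℝ) ≤ (m : ℝ) := by exact_mod_cast hm
  have ht1 : 1 ≤ t := Real.one_le_sqrt.mpr hm1
  have hu0 : 0 ≤ u := Real.sqrt_nonneg _
  have hs1 : 1 ≤ s := by linarith
  have hs0 : (0:ℝ) ≤ s := by linarith
  have hβ0 : 0 < β := by
    by_contra h
    push_neg at h
    have : s = 0 := Real.sqrt_eq_zero_of_nonpos h
    linarith
  have hs2 : s ^ 2 = β := Real.sq_sqrt hβ0.le
  have ht2 : t ^ 2 = (m : ℝ) := Real.sq_sqrt (by positivity)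
  have hu2 : u ^ 2 = γ := Real.sq_sqrt hγ
  have hβm : (m : ℝ) ≤ β := by nlinarith
  rcases le_or_gt x (m : ℝ) with hcase | hcase
  · -- x ≤ m : use ∑ ≤ exp x
    have hsum : (∑ k ∈ Finset.range m, x ^ k / (k.factorial : ℝ)) ≤ Real.exp x :=
      Real.sum_le_exp_of_nonneg hx m
    have key : γ / 25 ≤ (x - β) ^ 2 / (2 * β) := by
      rw [div_le_div_iff₀ (by norm_num) (by positivity)]
      have h1 : u * (s + t) ≤ (s - t) * (s + t) :=
        mul_le_mul_of_nonneg_right (by linarith) (by linarith)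
      have h2 : u * s ≤ β - (m : ℝ) := by nlinarith [mul_nonneg hu0 (by linarith : (0:ℝ) ≤ t)]
      have h3 : u * s ≤ β - x := by linarith
      have h4 : (u * s) ^ 2 ≤ (β - x) ^ 2 := pow_le_pow_left₀ (by positivity) h3 2
      have h5 : (u * s) ^ 2 = γ * β := by rw [mul_pow, hu2, hs2]
      nlinarith [mul_nonneg hγ hβ0.le]
    calc (∑ k ∈ Finset.range m, x ^ k / (k.factorial : ℝ)) *
          Real.exp (-x - (x - β) ^ 2 / (2 * β))
        ≤ Real.exp x * Real.exp (-x - (x - β) ^ 2 / (2 * β)) := by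
          exact mul_le_mul_of_nonneg_right hsum (Real.exp_nonneg _)
      _ = Real.exp (-((x - β) ^ 2 / (2 * β))) := by
          rw [← Real.exp_add]; ring_nf
      _ ≤ Real.exp (-γ / 25) := Real.exp_le_exp.mpr (by linarith)
  · -- m < x
    have hx0 : 0 < x := lt_of_lt_of_le (by linarith) le_rfl
    have hxm1 : 1 ≤ x / m := (one_le_div (by positivity)).mpr hcase.le
    have hsum : (∑ k ∈ Finset.range m, x ^ k / (k.factorial : ℝ)) ≤
        (x / m) ^ m * Real.exp (m : ℝ) := by
      calc (∑ k ∈ Finset.range m, x ^ k / (k.factorial : ℝ))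
          ≤ ∑ k ∈ Finset.range m, (x / m) ^ m * ((m : ℝ) ^ k / (k.factorial : ℝ)) := by
            apply Finset.sum_le_sum
            intro k hk
            have hk' : k ≤ m := (Finset.mem_range.mp hk).le
            have h1 : x ^ k = (x / m) ^ k * (m : ℝ) ^ k := by
              rw [← mul_pow]; congr 1; field_simp
            have h2 : (x / m) ^ k ≤ (x / m) ^ m := pow_le_pow_right₀ hxm1 hk'
            rw [h1]
            rw [mul_div_assoc]
            exact mul_le_mul_of_nonneg_right h2 (by positivity)
        _ = (x / m) ^ m * ∑ k ∈ Finset.range m, ((m : ℝ) ^ k / (k.factorial : ℝ)) := by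
            rw [Finset.mul_sum]
        _ ≤ (x / m) ^ m * Real.exp (m : ℝ) := by
            exact mul_le_mul_of_nonneg_left
              (Real.sum_le_exp_of_nonneg (by positivity) m) (by positivity)
    have hpow : (x / m) ^ m = Real.exp ((m : ℝ) * Real.log (x / m)) := by
      rw [Real.exp_nat_mul, Real.exp_log (by positivity)]
    -- logarithm bound
    have hX := Real.sqrt_nonneg x
    set X := Real.sqrt x with hX'
    have hX2 : X ^ 2 = x := Real.sq_sqrt hx0.le
    have hlog : Real.log (x / m) ≤ 2 * (X / t - 1) := by
      have h1 : Real.log (x / m) = 2 * Real.log (Real.sqrt (x / m)) := by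
        rw [Real.log_sqrt (by positivity)]; ring
      have h2 : Real.sqrt (x / m) = X / t := by
        rw [hX', ht, ← Real.sqrt_div hx0.le]
      rw [h1, h2]
      have := Real.log_le_sub_one_of_pos (x := X / t) (by
        have : 0 < X := Real.sqrt_pos.mpr hx0
        positivity)
      linarith
    have ht0 : 0 < t := by linarith
    have hmlog : (m : ℝ) * Real.log (x / m) + (m : ℝ) - x ≤ -((X - t) ^ 2) := by
      have h3 : (m : ℝ) * (X / t) = t * X := by
        rw [← ht2]; field_simp
      have h4 : (m : ℝ) * Real.log (x / m) ≤ 2 * t * X - 2 * m := by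
        calc (m : ℝ) * Real.log (x / m) ≤ (m : ℝ) * (2 * (X / t - 1)) :=
              mul_le_mul_of_nonneg_left hlog (by positivity)
          _ = 2 * ((m : ℝ) * (X / t)) - 2 * m := by ring
          _ = 2 * t * X - 2 * m := by rw [h3]; ring
      nlinarith [hX2, ht2]
    -- the quadratic term
    have hQ0 : 0 ≤ (x - β) ^ 2 / (2 * β) := by positivity
    have hfinal : (m : ℝ) * Real.log (x / m) + (m : ℝ) - x - (x - β) ^ 2 / (2 * β) ≤
        -γ / 25 := by
      rcases le_or_gt (γ / 25) ((X - t) ^ 2) with h25 | h25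
      · linarith
      · have hXt : 0 ≤ X - t := by
          have : t ≤ X := Real.sqrt_le_sqrt hcase.le
          linarith
        have hXu : X - t < u / 5 := by
          by_contra hcon
          push_neg at hcon
          have h6 : (u / 5) ^ 2 ≤ (X - t) ^ 2 := pow_le_pow_left₀ (by positivity) hcon 2
          nlinarith [h6, hu2]
        have hXs : X ≤ s := by linarith
        have hsX : 4 * u / 5 ≤ s - X := by linarith
        have hbx : 4 * u / 5 * s ≤ β - x := by nlinarith [mul_nonneg hXt hX]
        have h45 : (0:ℝ) ≤ 4 * u / 5 * s := by positivity
        have hQ : 8 * γ / 25 ≤ (x - β) ^ 2 / (2 * β) := by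
          rw [le_div_iff₀ (by positivity)]
          nlinarith [hbx, h45, hu2, hs2]
        have h0 : 0 ≤ (X - t) ^ 2 := sq_nonneg _
        linarith
    calc (∑ k ∈ Finset.range m, x ^ k / (k.factorial : ℝ)) *
          Real.exp (-x - (x - β) ^ 2 / (2 * β))
        ≤ ((x / m) ^ m * Real.exp (m : ℝ)) * Real.exp (-x - (x - β) ^ 2 / (2 * β)) :=
          mul_le_mul_of_nonneg_right hsum (Real.exp_nonneg _)
      _ = Real.exp ((m : ℝ) * Real.log (x / m) + (m : ℝ) + (-x - (x - β) ^ 2 / (2 * β))) := by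
          rw [hpow, ← Real.exp_add, ← Real.exp_add]
      _ ≤ Real.exp (-γ / 25) := Real.exp_le_exp.mpr (by linarith)


private lemma iterD_sub {f g : ℂ → ℂ} (hf : Differentiable ℂ f) (hg : Differentiable ℂ g)
    (n : ℕ) :
    iteratedDeriv n (fun z => f z - g z) =
      fun z => iteratedDeriv n f z - iteratedDeriv n g z := by
  have h1 : (fun z => f z - g z) = fun z => f z + (-1 : ℂ) * g z := by funext z; ring
  rw [h1, iterD_add hf (hg.const_mul (-1 : ℂ)) n, iterD_const_mul hg (-1 : ℂ) n]
  funext z; ring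

private lemma quot_bound (α C : ℝ) (hα : 0 < α) (hC : 0 < C) (z₀ lam : ℂ) (m : ℕ)
    (hm : 1 ≤ m) (hd : Real.sqrt ((m : ℝ) / α) + C ≤ ‖z₀ - lam‖) :
    quotInf α lam m (Ker α z₀) ≤ Real.exp (-(α * C ^ 2) / 25) := by
  set d : ℝ := ‖z₀ - lam‖ with hd'
  have hd0 : 0 < d := lt_of_lt_of_le (by positivity) hd
  set c2 : ℂ := (α : ℂ) * (starRingEnd ℂ) (z₀ - lam) with hc2'
  set E : ℂ → ℂ := fun z => Complex.exp (c2 * z + -(c2 * lam)) with hE'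
  set Pm : ℂ → ℂ := fun z =>
    ∑ i ∈ Finset.range m, c2 ^ i / (i.factorial : ℂ) * (z - lam) ^ i with hPm'
  set U : ℂ → ℂ := fun z =>
    Complex.exp ((α : ℂ) * (starRingEnd ℂ) lam * (z - lam)) with hU'
  set h : ℂ → ℂ := fun z => Ker α z₀ lam * U z * Pm z with hh'
  have hE : Differentiable ℂ E := by
    rw [hE']; exact ((differentiable_id.const_mul _).add_const _).cexp
  have hPmd : ∀ i : ℕ, Differentiable ℂ fun z : ℂ =>
      c2 ^ i / (i.factorial : ℂ) * (z - lam) ^ i :=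
    fun i => ((differentiable_id.sub_const lam).pow i).const_mul _
  have hPm : Differentiable ℂ Pm := by
    rw [hPm']; exact Differentiable.fun_sum fun i _ => hPmd i
  have hU : Differentiable ℂ U := by
    rw [hU']; exact ((differentiable_id.sub_const lam).const_mul _).cexp
  have hh : Differentiable ℂ h := by
    rw [hh']; exact ((hU.const_mul _).mul hPm)
  -- key factorization of the kernel
  have key : ∀ z, Ker α z₀ z = Ker α z₀ lam * U z * E z := by
    intro z
    rw [hU', hE']
    unfold Ker
    rw [← Complex.exp_add, ← Complex.exp_add]
    congr 1
    rw [hc2']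
    simp only [map_sub]
    ring
  -- jets of E - Pm vanish at lam to order m
  have hjets : ∀ k, k < m → iteratedDeriv k (fun z => E z - Pm z) lam = 0 := by
    intro k hk
    rw [iterD_sub hE hPm k]
    have h1 : iteratedDeriv k E lam = c2 ^ k := by
      rw [hE', iterD_exp c2 (-(c2 * lam)) k]
      simp
    have h2 : iteratedDeriv k Pm lam = c2 ^ k := by
      rw [hPm', iterD_sum (Finset.range m) (fun i _ => hPmd i) k]
      simp only
      have h3 : ∀ i : ℕ,
          iteratedDeriv k (fun z => c2 ^ i / (i.factorial : ℂ) * (z - lam) ^ i) lam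
            = c2 ^ i / (i.factorial : ℂ) * ((i.descFactorial k : ℂ) * (0 : ℂ) ^ (i - k)) := by
        intro i
        rw [iterD_const_mul (show Differentiable ℂ fun z : ℂ => (z - lam) ^ i from
            (differentiable_id.sub_const lam).pow i) _ k,
          iterD_monomial lam k i]
        simp
      rw [Finset.sum_congr rfl fun i _ => h3 i]
      rw [Finset.sum_eq_single k]
      · rw [Nat.descFactorial_self, Nat.sub_self, pow_zero, mul_one]
        have : ((k.factorial : ℂ)) ≠ 0 := by exact_mod_cast k.factorial_ne_zero
        field_simp
      · intro i _ hik
        rcases lt_or_gt_of_ne hik with hlt | hgt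
        · rw [Nat.descFactorial_eq_zero_iff_lt.mpr hlt]
          simp
        · rw [zero_pow (Nat.sub_ne_zero_of_lt hgt)]
          simp
      · intro hnk
        exact absurd (Finset.mem_range.mpr hk) hnk
    show iteratedDeriv k E lam - iteratedDeriv k Pm lam = 0
    rw [h1, h2, sub_self]
  -- derivatives of Ker - h vanish at lam to order m
  have hvanish : ∀ j, j < m → iteratedDeriv j (fun z => Ker α z₀ z - h z) lam = 0 := by
    intro j hj
    have hfun : (fun z => Ker α z₀ z - h z)
        = fun z => (Ker α z₀ lam * U z) * (E z - Pm z) := by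
      funext z
      rw [key z, hh']
      ring
    rw [hfun]
    exact iterD_mul_vanish j (fun z => Ker α z₀ lam * U z) (fun z => E z - Pm z)
      (hU.const_mul _) (hE.sub hPm) (fun k hk => hjets k (lt_of_le_of_lt hk hj))
  -- weighted modulus of the "small" part
  have hI2 : ∀ z, ‖Ker α z₀ lam * U z‖ * Real.exp (-(α / 2) * ‖z‖ ^ 2)
      = Real.exp (-(α / 2) * d ^ 2 + -(α / 2) * ‖z - lam‖ ^ 2) := by
    intro z
    rw [hU']
    unfold Ker
    rw [norm_mul, Complex.norm_exp, Complex.norm_exp, hd']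
    rw [← Real.exp_add, ← Real.exp_add]
    congr 1
    simp only [Complex.sq_norm, Complex.add_re, Complex.mul_re, Complex.mul_im,
      Complex.ofReal_re, Complex.ofReal_im, Complex.conj_re, Complex.conj_im,
      Complex.normSq_apply, Complex.sub_re, Complex.sub_im]
    ring
  have hPmb : ∀ z, ‖Pm z‖ ≤
      ∑ k ∈ Finset.range m, (α * d * ‖z - lam‖) ^ k / (k.factorial : ℝ) := by
    intro z
    rw [hPm']
    refine (norm_sum_le _ _).trans ?_
    refine Finset.sum_le_sum fun i _ => ?_
    rw [norm_mul, norm_div, norm_pow, norm_pow]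
    have hc2a : ‖c2‖ = α * d := by
      rw [hc2', norm_mul, Complex.norm_real, Real.norm_eq_abs, Complex.norm_conj, abs_of_pos hα, hd']
    rw [hc2a, Complex.norm_natCast]
    refine le_of_eq ?_
    rw [mul_pow, mul_pow]
    ring
  have hbound : ∀ z, ‖h z‖ * Real.exp (-(α / 2) * ‖z‖ ^ 2)
      ≤ Real.exp (-(α * C ^ 2) / 25) := by
    intro z
    set r := ‖z - lam‖ with hr'
    have hr0 : 0 ≤ r := norm_nonneg _
    have hx0 : 0 ≤ α * d * r := by positivity
    have hsqrt : Real.sqrt (m : ℝ) + Real.sqrt (α * C ^ 2) ≤ Real.sqrt (α * d ^ 2) := by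
      have h1 : Real.sqrt (α * d ^ 2) = Real.sqrt α * d := by
        rw [Real.sqrt_mul hα.le, Real.sqrt_sq hd0.le]
      have h2 : Real.sqrt (α * C ^ 2) = Real.sqrt α * C := by
        rw [Real.sqrt_mul hα.le, Real.sqrt_sq hC.le]
      have h3 : Real.sqrt (m : ℝ) = Real.sqrt α * Real.sqrt ((m : ℝ) / α) := by
        rw [← Real.sqrt_mul hα.le]
        congr 1
        field_simp
      rw [h1, h2, h3, ← mul_add]
      exact mul_le_mul_of_nonneg_left hd (Real.sqrt_nonneg α)
    have hexp : -(α / 2) * d ^ 2 + -(α / 2) * r ^ 2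
        = -(α * d * r) - (α * d * r - α * d ^ 2) ^ 2 / (2 * (α * d ^ 2)) := by
      field_simp
      ring
    have hcore := core_est m hm (α * d ^ 2) (α * C ^ 2) (α * d * r)
      (by positivity) hx0 hsqrt
    calc ‖h z‖ * Real.exp (-(α / 2) * ‖z‖ ^ 2)
        = (‖Ker α z₀ lam * U z‖ * Real.exp (-(α / 2) * ‖z‖ ^ 2)) *
            ‖Pm z‖ := by
          rw [hh', norm_mul]
          ring
      _ = Real.exp (-(α / 2) * d ^ 2 + -(α / 2) * r ^ 2) * ‖Pm z‖ := by
          rw [hI2 z]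
      _ ≤ Real.exp (-(α / 2) * d ^ 2 + -(α / 2) * r ^ 2) *
            (∑ k ∈ Finset.range m, (α * d * r) ^ k / (k.factorial : ℝ)) :=
          mul_le_mul_of_nonneg_left (hPmb z) (Real.exp_nonneg _)
      _ = (∑ k ∈ Finset.range m, (α * d * r) ^ k / (k.factorial : ℝ)) *
            Real.exp (-(α * d * r) - (α * d * r - α * d ^ 2) ^ 2 / (2 * (α * d ^ 2))) := by
          rw [← hexp]
          ring
      _ ≤ Real.exp (-(α * C ^ 2) / 25) := hcore
  -- conclude
  set g : ℂ → ℂ := fun z => Ker α z₀ z - h z with hg'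
  have hmemg : MemFInf α g := by
    constructor
    · rw [hg']; exact (Ker_diff α z₀).sub hh
    · refine ⟨1 + Real.exp (-(α * C ^ 2) / 25), fun z => ?_⟩
      have h1 : ‖g z‖ ≤ ‖Ker α z₀ z‖ + ‖h z‖ := by
        rw [hg']
        simpa using norm_sub_le (Ker α z₀ z) (h z)
      calc ‖g z‖ * Real.exp (-(α / 2) * ‖z‖ ^ 2)
          ≤ (‖Ker α z₀ z‖ + ‖h z‖) *
              Real.exp (-(α / 2) * ‖z‖ ^ 2) :=
            mul_le_mul_of_nonneg_right h1 (Real.exp_nonneg _)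
        _ = ‖Ker α z₀ z‖ * Real.exp (-(α / 2) * ‖z‖ ^ 2)
              + ‖h z‖ * Real.exp (-(α / 2) * ‖z‖ ^ 2) := by ring
        _ ≤ 1 + Real.exp (-(α * C ^ 2) / 25) := by
            refine add_le_add ?_ (hbound z)
            rw [Ker_weight]
            apply Real.exp_le_one_iff.mpr
            have := sq_nonneg (‖z - z₀‖)
            nlinarith
  have hquot : quotInf α lam m (Ker α z₀) ≤
      FInfNorm α (fun z => Ker α z₀ z - g z) := by
    apply csInf_le
    · exact ⟨0, fun c hc => by obtain ⟨g', _, rfl⟩ := hc; exact FInfNorm_nonneg _ _⟩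
    · exact ⟨g, ⟨hmemg, fun k hk => by rw [hg']; exact hvanish k hk⟩, rfl⟩
  have heq : (fun z => Ker α z₀ z - g z) = h := by
    funext z; rw [hg']; ring
  rw [heq] at hquot
  exact hquot.trans (ciSup_le hbound)

/-- If `X` is a sampling divisor for `F^∞_α`, then there exists `C > 0` such that
the discs `D(λ, √(m_λ/α) + C)` cover `ℂ`. -/
theorem stmt6 (α : ℝ) (hα : 0 < α) (Λ : Set ℂ) (m : ℂ → ℕ)
    (hΛ : Λ.Countable) (hm : ∀ lam ∈ Λ, 1 ≤ m lam)
    (hsamp : SamplingFInf α Λ m) :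
    ∃ C : ℝ, 0 < C ∧
      (⋃ lam ∈ Λ, ball lam (Real.sqrt ((m lam : ℝ) / α) + C)) = Set.univ := by
  obtain ⟨L, hL, hS⟩ := hsamp
  set L' : ℝ := max L 1 with hL''
  have hL'1 : (1 : ℝ) ≤ L' := le_max_right _ _
  have hL'0 : (0 : ℝ) < L' := lt_of_lt_of_le one_pos hL'1
  have hlogL' : 0 ≤ Real.log L' := Real.log_nonneg hL'1
  set C : ℝ := Real.sqrt (25 * (Real.log L' + 1) / α) with hC'
  have hC0 : 0 < C := Real.sqrt_pos.mpr (by positivity)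
  refine ⟨C, hC0, ?_⟩
  by_contra hne
  obtain ⟨z₀, hz₀⟩ := (ne_univ_iff_exists_notMem _).mp hne
  have hz' : ∀ lam ∈ Λ, Real.sqrt ((m lam : ℝ) / α) + C ≤ ‖z₀ - lam‖ := by
    intro lam hlam
    have h1 : z₀ ∉ ball lam (Real.sqrt ((m lam : ℝ) / α) + C) := fun hmem =>
      hz₀ (Set.mem_biUnion hlam hmem)
    rw [mem_ball, Complex.dist_eq] at h1
    exact not_lt.mp h1
  -- the subtle value of the exponent
  have hCval : -(α * C ^ 2) / 25 = -(Real.log L' + 1) := by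
    rw [hC', Real.sq_sqrt (by positivity)]
    field_simp
  have hLε : L' * Real.exp (-(α * C ^ 2) / 25) < 1 := by
    rw [hCval]
    have : L' * Real.exp (-(Real.log L' + 1)) = Real.exp (-1) := by
      rw [show -(Real.log L' + 1) = -Real.log L' + -1 by ring, Real.exp_add,
        Real.exp_neg, Real.exp_log hL'0]
      field_simp
    rw [this]
    calc Real.exp (-1) < Real.exp 0 := Real.exp_lt_exp.mpr (by norm_num)
      _ = 1 := Real.exp_zero
  have hKmem : MemFInf α (Ker α z₀) := Ker_mem α hα.le z₀
  have hK1 : 1 ≤ FInfNorm α (Ker α z₀) := Ker_norm_ge α hα.le z₀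
  rcases Set.eq_empty_or_nonempty Λ with hΛe | hΛne
  · -- empty: supremum is 0
    haveI : IsEmpty ↥Λ := Set.isEmpty_coe_sort.mpr hΛe
    have h0 : (⨆ lam : Λ, quotInf α (lam : ℂ) (m (lam : ℂ)) (Ker α z₀)) = 0 :=
      Real.iSup_of_isEmpty _
    have := hS (Ker α z₀) hKmem
    rw [h0, mul_zero] at this
    linarith
  · haveI : Nonempty ↥Λ := hΛne.to_subtype
    have hsup : (⨆ lam : Λ, quotInf α (lam : ℂ) (m (lam : ℂ)) (Ker α z₀)) ≤
        Real.exp (-(α * C ^ 2) / 25) :=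
      ciSup_le fun lam =>
        quot_bound α C hα hC0 z₀ (lam : ℂ) (m (lam : ℂ)) (hm _ lam.2) (hz' _ lam.2)
    have hsup0 : 0 ≤ (⨆ lam : Λ, quotInf α (lam : ℂ) (m (lam : ℂ)) (Ker α z₀)) :=
      Real.iSup_nonneg fun lam => quotInf_nonneg _ _ _ _
    have hchain : FInfNorm α (Ker α z₀) ≤ L' * Real.exp (-(α * C ^ 2) / 25) := by
      calc FInfNorm α (Ker α z₀)
          ≤ L * (⨆ lam : Λ, quotInf α (lam : ℂ) (m (lam : ℂ)) (Ker α z₀)) :=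
            hS (Ker α z₀) hKmem
        _ ≤ L' * (⨆ lam : Λ, quotInf α (lam : ℂ) (m (lam : ℂ)) (Ker α z₀)) :=
            mul_le_mul_of_nonneg_right (le_max_left _ _) hsup0
        _ ≤ L' * Real.exp (-(α * C ^ 2) / 25) :=
            mul_le_mul_of_nonneg_left hsup hL'0.le
    linarith


end
end

section
/- There exists an absolute constant c > 0 with the following property: if three discs D₁ = D(Z₁, r₁), D₂ = D(Z₂, r₂), D₃ = D(Z₃, r₃) in ℂ satisfy D₁ ∩ D₂ ∩ D₃ ≠ ∅, then there exist indices 1 ≤ i, j ≤ 3 with i ≠ j such that both (a) r_i + r_j − |Z_i − Z_j| ≥ c · min(r_i, r_j), and (b) m(D_i ∩ D_j) ≥ c · min(r_i, r_j)², where m(A) denotes the Lebesgue area of A. -/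
open MeasureTheory Metric Set

/-- If two balls overlap with gap at least `2*s`, their intersection contains a ball
of radius `s` (assuming `s ≤ r₁ ≤ r₂`). -/
lemma aux_ball_in_inter (Z₁ Z₂ : ℂ) (r₁ r₂ s : ℝ) (hs0 : 0 < s) (hs1 : s ≤ r₁)
    (hle : r₁ ≤ r₂) (hgap : 2 * s ≤ r₁ + r₂ - ‖Z₁ - Z₂‖) :
    ∃ p : ℂ, ball p s ⊆ ball Z₁ r₁ ∩ ball Z₂ r₂ := by
  set d : ℝ := ‖Z₁ - Z₂‖ with hd
  have hd0 : 0 ≤ d := norm_nonneg _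
  rcases eq_or_lt_of_le hd0 with h0 | h0
  · -- centers coincide
    have hZ : Z₁ = Z₂ := by
      have h : ‖Z₁ - Z₂‖ = 0 := by rw [← hd, ← h0]
      rw [norm_eq_zero] at h
      exact sub_eq_zero.mp h
    refine ⟨Z₁, subset_inter (ball_subset_ball hs1) ?_⟩
    rw [hZ]
    exact ball_subset_ball (hs1.trans hle)
  · set t : ℝ := (r₁ - s) / d with ht
    have htd : t * d = r₁ - s := by
      rw [ht]; field_simp
    refine ⟨Z₁ + (t : ℂ) * (Z₂ - Z₁), subset_inter ?_ ?_⟩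
    · apply ball_subset_ball'
      have h1 : dist (Z₁ + (t : ℂ) * (Z₂ - Z₁)) Z₁ = r₁ - s := by
        rw [Complex.dist_eq]
        have he : Z₁ + (t : ℂ) * (Z₂ - Z₁) - Z₁ = (t : ℂ) * (Z₂ - Z₁) := by ring
        rw [he, norm_mul, Complex.norm_real, Real.norm_eq_abs, norm_sub_rev Z₂ Z₁, ← hd,
          abs_of_nonneg (div_nonneg (by linarith) hd0)]
        exact htd
      linarith
    · apply ball_subset_ball'
      have h1 : dist (Z₁ + (t : ℂ) * (Z₂ - Z₁)) Z₂ = |r₁ - s - d| := by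
        rw [Complex.dist_eq]
        have he : Z₁ + (t : ℂ) * (Z₂ - Z₁) - Z₂ = ((t - 1 : ℝ) : ℂ) * (Z₂ - Z₁) := by
          push_cast; ring
        rw [he, norm_mul, Complex.norm_real, Real.norm_eq_abs, norm_sub_rev Z₂ Z₁, ← hd,
          ← abs_of_nonneg hd0, ← abs_mul]
        congr 1
        rw [abs_of_nonneg hd0, sub_mul, one_mul, htd]
      have h2 : |r₁ - s - d| ≤ r₂ - s := by
        rw [abs_le]
        constructor <;> linarith
      linarith

/-- Pairing lemma: among three balls with a common point, two of them have gap
at least `min/8`. -/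
lemma aux_pairing (Z : Fin 3 → ℂ) (r : Fin 3 → ℝ) (hr : ∀ i, 0 < r i)
    (x : ℂ) (hx : ∀ i, ‖Z i - x‖ < r i) :
    ∃ i j : Fin 3, i ≠ j ∧
      min (r i) (r j) / 8 ≤ r i + r j - ‖Z i - Z j‖ := by
  by_cases hA : ∃ i, ‖Z i - x‖ ≤ r i / 2
  · obtain ⟨i, hi⟩ := hA
    set j : Fin 3 := if i = 0 then 1 else 0 with hj
    have hij : i ≠ j := by
      rcases eq_or_ne i 0 with h | h
      · rw [hj, if_pos h, h]; decide
      · rw [hj, if_neg h]; exact h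
    refine ⟨i, j, hij, ?_⟩
    have htri : ‖Z i - Z j‖ ≤ ‖Z i - x‖ + ‖Z j - x‖ := by
      have h1 := norm_add_le (Z i - x) (x - Z j)
      have h2 : (Z i - x) + (x - Z j) = Z i - Z j := by ring
      rw [h2, norm_sub_rev x (Z j)] at h1
      exact h1
    have hmin : min (r i) (r j) ≤ r i := min_le_left _ _
    have := hx j
    have := hr i
    linarith
  · push_neg at hA
    set u : Fin 3 → ℂ := fun i => Z i - x with hu
    set a : Fin 3 → ℝ := fun i => ‖u i‖ with hadef
    have ha : ∀ i, r i / 2 < a i := hA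
    have ha' : ∀ i, a i < r i := hx
    have ha0 : ∀ i, 0 < a i := fun i => lt_trans (half_pos (hr i)) (ha i)
    have hsq : ∀ i, (u i).re ^ 2 + (u i).im ^ 2 = a i ^ 2 := by
      intro i
      rw [hadef]
      simp only [Complex.sq_norm, Complex.normSq_apply]
      ring
    have key : ∃ i j : Fin 3, i ≠ j ∧
        -(a i * a j) / 2 ≤ (u i).re * (u j).re + (u i).im * (u j).im := by
      by_contra hcon
      push_neg at hcon
      have h01 := hcon 0 1 (by decide)
      have h02 := hcon 0 2 (by decide)
      have h12 := hcon 1 2 (by decide)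
      have e0 : (a 1 * a 2) ^ 2 * ((u 0).re ^ 2 + (u 0).im ^ 2) = (a 1 * a 2) ^ 2 * a 0 ^ 2 := by
        rw [hsq 0]
      have e1 : (a 0 * a 2) ^ 2 * ((u 1).re ^ 2 + (u 1).im ^ 2) = (a 0 * a 2) ^ 2 * a 1 ^ 2 := by
        rw [hsq 1]
      have e2 : (a 0 * a 1) ^ 2 * ((u 2).re ^ 2 + (u 2).im ^ 2) = (a 0 * a 1) ^ 2 * a 2 ^ 2 := by
        rw [hsq 2]
      have hexp : 0 ≤ 3 * (a 0 * a 1 * a 2) ^ 2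
          + 2 * (a 0 * a 1 * a 2) *
            (a 2 * ((u 0).re * (u 1).re + (u 0).im * (u 1).im)
              + a 1 * ((u 0).re * (u 2).re + (u 0).im * (u 2).im)
              + a 0 * ((u 1).re * (u 2).re + (u 1).im * (u 2).im)) := by
        nlinarith [sq_nonneg (a 1 * a 2 * (u 0).re + a 0 * a 2 * (u 1).re + a 0 * a 1 * (u 2).re),
          sq_nonneg (a 1 * a 2 * (u 0).im + a 0 * a 2 * (u 1).im + a 0 * a 1 * (u 2).im),
          e0, e1, e2]
      have hp01 : 0 < a 0 * a 1 * a 2 * a 2 :=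
        mul_pos (mul_pos (mul_pos (ha0 0) (ha0 1)) (ha0 2)) (ha0 2)
      have hp02 : 0 < a 0 * a 1 * a 2 * a 1 :=
        mul_pos (mul_pos (mul_pos (ha0 0) (ha0 1)) (ha0 2)) (ha0 1)
      have hp12 : 0 < a 0 * a 1 * a 2 * a 0 :=
        mul_pos (mul_pos (mul_pos (ha0 0) (ha0 1)) (ha0 2)) (ha0 0)
      have c01 := mul_lt_mul_of_pos_left h01 hp01
      have c02 := mul_lt_mul_of_pos_left h02 hp02
      have c12 := mul_lt_mul_of_pos_left h12 hp12
      nlinarith [hexp, c01, c02, c12]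
    obtain ⟨i, j, hij, hf⟩ := key
    refine ⟨i, j, hij, ?_⟩
    set d : ℝ := ‖Z i - Z j‖ with hd
    have hd0 : 0 ≤ d := norm_nonneg _
    set m : ℝ := min (r i) (r j) with hm
    have hmi : m ≤ r i := min_le_left _ _
    have hmj : m ≤ r j := min_le_right _ _
    have hm0 : 0 < m := lt_min (hr i) (hr j)
    have hdsq : d ^ 2 = ((u i).re - (u j).re) ^ 2 + ((u i).im - (u j).im) ^ 2 := by
      have huu : Z i - Z j = u i - u j := by simp only [hu]; ring
      rw [hd, huu]
      simp only [Complex.sq_norm, Complex.normSq_apply, Complex.sub_re, Complex.sub_im]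
      ring
    have he0 : 0 ≤ a i + a j - m / 8 := by
      have := ha i
      have := ha j
      linarith
    have hd2 : d ^ 2 ≤ (a i + a j - m / 8) ^ 2 := by
      have hi2 : 0 < 2 * a i - m := by have := ha i; linarith
      have hj2 : 0 < 2 * a j - m := by have := ha j; linarith
      have hq : d ^ 2 ≤ a i ^ 2 + a j ^ 2 + a i * a j := by
        linarith [hdsq, hsq i, hsq j, hf]
      have hq2 : a i ^ 2 + a j ^ 2 + a i * a j ≤ (a i + a j - m / 8) ^ 2 := by
        nlinarith [mul_pos hi2 hj2, mul_pos hi2 hm0, mul_pos hj2 hm0]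
      exact hq.trans hq2
    have hdle : d ≤ a i + a j - m / 8 := (pow_le_pow_iff_left₀ hd0 he0 two_ne_zero).mp hd2
    have := ha' i
    have := ha' j
    linarith

/-- There is an absolute constant `c > 0` such that whenever three discs
`D(Z i, r i)`, `i = 1,2,3`, have a common point, two of them (with `i ≠ j`) satisfy
`r i + r j − |Z i − Z j| ≥ c min(r i, r j)` and
`m(D i ∩ D j) ≥ c min(r i, r j)²`. -/
theorem stmt14 :
    ∃ c : ℝ, 0 < c ∧ ∀ (Z : Fin 3 → ℂ) (r : Fin 3 → ℝ), (∀ i, 0 < r i) →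
      (⋂ i, ball (Z i) (r i)).Nonempty →
      ∃ i j : Fin 3, i ≠ j ∧
        c * min (r i) (r j) ≤ r i + r j - ‖Z i - Z j‖ ∧
        ENNReal.ofReal (c * min (r i) (r j) ^ 2) ≤
          volume (ball (Z i) (r i) ∩ ball (Z j) (r j)) := by
  refine ⟨1 / 256, by norm_num, ?_⟩
  intro Z r hr hne
  obtain ⟨x, hx⟩ := hne
  simp only [mem_iInter, mem_ball] at hx
  have hx' : ∀ i, ‖Z i - x‖ < r i := by
    intro i
    have := hx i
    rwa [Complex.dist_eq, norm_sub_rev x (Z i)] at this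
  obtain ⟨i, j, hij, hgap⟩ := aux_pairing Z r hr x hx'
  have main : ∀ i j : Fin 3, min (r i) (r j) / 8 ≤ r i + r j - ‖Z i - Z j‖ →
      r i ≤ r j →
      ENNReal.ofReal (1 / 256 * min (r i) (r j) ^ 2) ≤
        volume (ball (Z i) (r i) ∩ ball (Z j) (r j)) := by
    intro i j hgap hle
    set m : ℝ := min (r i) (r j) with hm
    have hm0 : 0 < m := lt_min (hr i) (hr j)
    have hmi : m ≤ r i := min_le_left _ _
    obtain ⟨p, hp⟩ := aux_ball_in_inter (Z i) (Z j) (r i) (r j) (m / 16)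
      (by positivity) (by linarith) hle (by linarith)
    have hpi : (1 : ENNReal) ≤ (NNReal.pi : ENNReal) := by
      rw [← ENNReal.coe_one, ENNReal.coe_le_coe, ← NNReal.coe_le_coe,
        NNReal.coe_real_pi, NNReal.coe_one]
      linarith [Real.pi_gt_three]
    calc ENNReal.ofReal (1 / 256 * m ^ 2)
        ≤ volume (ball p (m / 16)) := by
          rw [Complex.volume_ball, ← ENNReal.ofReal_pow (by positivity)]
          calc ENNReal.ofReal (1 / 256 * m ^ 2)
              ≤ ENNReal.ofReal ((m / 16) ^ 2) := by
                apply ENNReal.ofReal_le_ofReal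
                nlinarith
            _ = ENNReal.ofReal ((m / 16) ^ 2) * 1 := by rw [mul_one]
            _ ≤ ENNReal.ofReal ((m / 16) ^ 2) * (NNReal.pi : ENNReal) :=
                mul_le_mul_right hpi _
      _ ≤ volume (ball (Z i) (r i) ∩ ball (Z j) (r j)) := measure_mono hp
  rcases le_total (r i) (r j) with h | h
  · refine ⟨i, j, hij, ?_, main i j hgap h⟩
    have hm0 : 0 < min (r i) (r j) := lt_min (hr i) (hr j)
    linarith
  · have hgap' : min (r j) (r i) / 8 ≤ r j + r i - ‖Z j - Z i‖ := by
      rw [min_comm, norm_sub_rev (Z j) (Z i)]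
      linarith [hgap]
    refine ⟨j, i, hij.symm, ?_, main j i hgap' h⟩
    have hm0 : 0 < min (r j) (r i) := lt_min (hr j) (hr i)
    linarith
end

section
/- Define σ_k(x) = (1/k!) ∫_0^x y^k e^{−y} dy and ω_k(x) = e^{−x} Σ_{s=0}^k x^s/s! for x ≥ 0 and integers k ≥ 0. Then: (a) for every t ≥ 0 there exist ε > 0 and k₀ > 0 such that σ_k(k − t√k) ≥ ε for every k ≥ k₀; (b) for every t ≥ 0 there exists ε > 0 such that ω_k(k + t√k) ≥ ε for every k ≥ 0; (c) for every ε > 0 there exists t > 0 such that σ_k(m − t√m) ≤ ε σ_k(m) whenever k ≥ t² and t² ≤ m ≤ k. -/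
open MeasureTheory

noncomputable section

/-- `σ_k(x) = (1/k!) ∫_0^x y^k e^{−y} dy`. -/
def sigmaInc (k : ℕ) (x : ℝ) : ℝ :=
  (1 / (Nat.factorial k : ℝ)) * ∫ y in (0 : ℝ)..x, y ^ k * Real.exp (-y)

/-- `ω_k(x) = e^{−x} Σ_{s=0}^k x^s/s!`. -/
def omegaInc (k : ℕ) (x : ℝ) : ℝ :=
  Real.exp (-x) * ∑ s ∈ Finset.range (k + 1), x ^ s / (Nat.factorial s : ℝ)

lemma key (k : ℕ) {x y : ℝ} (hx : 0 < x) (hy : 0 ≤ y) :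
    y ^ k * Real.exp (-y) ≤ x ^ k * Real.exp (-x) * Real.exp (((k : ℝ) - x) / x * (y - x)) := by
  rcases Nat.eq_zero_or_pos k with hk | hk
  · subst hk
    simp only [pow_zero, Nat.cast_zero, one_mul]
    rw [← Real.exp_add]
    apply le_of_eq
    congr 1
    field_simp
    ring
  rcases eq_or_lt_of_le hy with hy0 | hy0
  · rw [← hy0]
    simp only [zero_pow (by omega : k ≠ 0), zero_mul]
    positivity
  · have h1 : y ^ k = Real.exp ((k : ℝ) * Real.log y) := by
      rw [← Real.log_pow, Real.exp_log (by positivity)]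
    have h2 : x ^ k = Real.exp ((k : ℝ) * Real.log x) := by
      rw [← Real.log_pow, Real.exp_log (by positivity)]
    rw [h1, h2, ← Real.exp_add, ← Real.exp_add, ← Real.exp_add, Real.exp_le_exp]
    have hlog : Real.log y - Real.log x ≤ y / x - 1 := by
      rw [← Real.log_div (ne_of_gt hy0) (ne_of_gt hx)]
      exact Real.log_le_sub_one_of_pos (by positivity)
    have hkx : (0:ℝ) ≤ (k:ℝ) := Nat.cast_nonneg k
    have h3 := mul_le_mul_of_nonneg_left hlog hkx
    have hdiv : ((k : ℝ) - x) / x * (y - x) = (k:ℝ) * (y/x - 1) + x - y := by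
      field_simp
      ring
    rw [hdiv]
    linarith [h3]

lemma mono_g (k : ℕ) {x y : ℝ} (hy : 0 ≤ y) (hyx : y ≤ x) (hxk : x ≤ (k : ℝ)) :
    y ^ k * Real.exp (-y) ≤ x ^ k * Real.exp (-x) := by
  rcases eq_or_lt_of_le (hy.trans hyx) with hx0 | hx0
  · have : y = 0 := le_antisymm (hyx.trans hx0.symm.le) hy
    rw [this, ← hx0]
  · have hexp : Real.exp (((k : ℝ) - x) / x * (y - x)) ≤ 1 := by
      rw [Real.exp_le_one_iff]
      apply mul_nonpos_of_nonneg_of_nonpos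
      · apply div_nonneg <;> linarith
      · linarith
    have hnn : (0:ℝ) ≤ x ^ k * Real.exp (-x) := by positivity
    calc y ^ k * Real.exp (-y)
        ≤ x ^ k * Real.exp (-x) * Real.exp (((k : ℝ) - x) / x * (y - x)) := key k hx0 hy
      _ ≤ x ^ k * Real.exp (-x) * 1 := mul_le_mul_of_nonneg_left hexp hnn
      _ = x ^ k * Real.exp (-x) := mul_one _

lemma anti_g (k : ℕ) {x y : ℝ} (hkx : (k : ℝ) ≤ x) (hxy : x ≤ y) :
    y ^ k * Real.exp (-y) ≤ x ^ k * Real.exp (-x) := by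
  rcases Nat.eq_zero_or_pos k with hk | hk
  · subst hk
    simp only [pow_zero, one_mul]
    exact Real.exp_le_exp.2 (by linarith)
  · have hx0 : 0 < x := lt_of_lt_of_le (by exact_mod_cast hk) hkx
    have hexp : Real.exp (((k : ℝ) - x) / x * (y - x)) ≤ 1 := by
      rw [Real.exp_le_one_iff]
      apply mul_nonpos_of_nonpos_of_nonneg
      · apply div_nonpos_of_nonpos_of_nonneg <;> linarith
      · linarith
    have hnn : (0:ℝ) ≤ x ^ k * Real.exp (-x) := by positivity
    calc y ^ k * Real.exp (-y)
        ≤ x ^ k * Real.exp (-x) * Real.exp (((k : ℝ) - x) / x * (y - x)) :=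
          key k hx0 (by linarith)
      _ ≤ x ^ k * Real.exp (-x) * 1 := mul_le_mul_of_nonneg_left hexp hnn
      _ = x ^ k * Real.exp (-x) := mul_one _

lemma stirling_ub' (n : ℕ) :
    ((Nat.factorial (n+1) : ℝ)) ≤
      Real.exp 1 * Real.sqrt ((n+1:ℕ)) * (((n+1 : ℕ) : ℝ) ^ (n+1) * Real.exp (-((n+1:ℕ):ℝ))) := by
  have h1 := Stirling.log_stirlingSeq'_antitone (Nat.zero_le n)
  simp only [Function.comp, Nat.succ_eq_add_one, Nat.zero_add] at h1
  have hpos := Stirling.stirlingSeq'_pos n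
  have hpos1 := Stirling.stirlingSeq'_pos 0
  rw [Nat.zero_add] at hpos1
  have h2 : Stirling.stirlingSeq (n + 1) ≤ Stirling.stirlingSeq 1 :=
    (Real.log_le_log_iff hpos hpos1).1 h1
  rw [Stirling.stirlingSeq_one] at h2
  have hden : 0 < Real.sqrt (2 * ((n+1:ℕ):ℝ)) * (((n+1:ℕ):ℝ) / Real.exp 1) ^ (n+1) := by
    positivity
  have hdef : Stirling.stirlingSeq (n+1)
      = (Nat.factorial (n+1) : ℝ) / (Real.sqrt (2 * ((n+1:ℕ):ℝ)) * (((n+1:ℕ):ℝ) / Real.exp 1) ^ (n+1)) := rfl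
  rw [hdef, div_le_iff₀ hden] at h2
  calc (Nat.factorial (n+1) : ℝ)
      ≤ Real.exp 1 / Real.sqrt 2 * (Real.sqrt (2 * ((n+1:ℕ):ℝ)) * (((n+1:ℕ):ℝ) / Real.exp 1) ^ (n+1)) := h2
    _ = Real.exp 1 * Real.sqrt ((n+1:ℕ)) * ((((n+1:ℕ)) : ℝ) ^ (n+1) * Real.exp (-((n+1:ℕ):ℝ))) := by
        rw [Real.sqrt_mul (by norm_num : (0:ℝ) ≤ 2), div_pow, ← Real.exp_nat_mul, mul_one,
          Real.exp_neg]
        have h2pos : (0:ℝ) < Real.sqrt 2 := by positivity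
        field_simp
  
lemma stirling_ub (k : ℕ) (hk : 1 ≤ k) :
    ((Nat.factorial k : ℝ)) ≤ Real.exp 1 * Real.sqrt k * ((k : ℝ) ^ k * Real.exp (-(k:ℝ))) := by
  obtain ⟨n, rfl⟩ : ∃ n, k = n + 1 := ⟨k - 1, by omega⟩
  exact_mod_cast stirling_ub' n

lemma cont_g (k : ℕ) : Continuous (fun y : ℝ => y ^ k * Real.exp (-y)) := by
  fun_prop

lemma intble_g (k : ℕ) (a b : ℝ) :
    IntervalIntegrable (fun y : ℝ => y ^ k * Real.exp (-y)) volume a b :=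
  (cont_g k).intervalIntegrable a b

lemma sigma_succ (k : ℕ) (x : ℝ) :
    sigmaInc (k+1) x = sigmaInc k x - x ^ (k+1) * Real.exp (-x) / (Nat.factorial (k+1) : ℝ) := by
  have hu : ∀ y ∈ Set.uIcc (0:ℝ) x, HasDerivAt (fun y : ℝ => y ^ (k+1)) ((k+1 : ℕ) * y ^ k) y := by
    intro y _
    simpa using hasDerivAt_pow (k+1) y
  have hv : ∀ y ∈ Set.uIcc (0:ℝ) x, HasDerivAt (fun y : ℝ => -Real.exp (-y)) (Real.exp (-y)) y := by
    intro y _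
    have h := ((Real.hasDerivAt_exp (-y)).comp y ((hasDerivAt_id y).neg)).neg
    rw [mul_neg, mul_one, neg_neg] at h
    exact h
  have hibp := intervalIntegral.integral_mul_deriv_eq_deriv_mul hu hv
    (by apply Continuous.intervalIntegrable; fun_prop)
    (by apply Continuous.intervalIntegrable; fun_prop)
  have h2 : (∫ y in (0:ℝ)..x, y ^ (k+1) * Real.exp (-y))
      = x ^ (k+1) * (-Real.exp (-x)) + (k+1 : ℕ) * ∫ y in (0:ℝ)..x, y ^ k * Real.exp (-y) := by
    rw [hibp]
    simp only [zero_pow (by omega : k + 1 ≠ 0), zero_mul, sub_zero, neg_zero, neg_mul, mul_neg]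
    rw [intervalIntegral.integral_neg, sub_neg_eq_add, ← intervalIntegral.integral_const_mul]
    congr 1
    apply intervalIntegral.integral_congr
    intro y _
    ring
  unfold sigmaInc
  rw [h2]
  have hfac : (Nat.factorial (k+1) : ℝ) = (k+1 : ℕ) * (Nat.factorial k : ℝ) := by
    rw [Nat.factorial_succ]; push_cast; ring
  have h1 : (Nat.factorial k : ℝ) ≠ 0 := by positivity
  have h3 : ((k:ℝ) + 1) ≠ 0 := by positivity
  rw [hfac]
  push_cast
  field_simp
  ring

lemma sigma_add_omega (k : ℕ) (x : ℝ) : sigmaInc k x + omegaInc k x = 1 := by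
  induction k with
  | zero =>
      unfold sigmaInc omegaInc
      simp only [Nat.factorial_zero, Nat.cast_one, pow_zero, Finset.range_one,
        Finset.sum_singleton, one_mul, Nat.cast_one]
      have : (∫ y in (0:ℝ)..x, Real.exp (-y)) = 1 - Real.exp (-x) := by
        have h := intervalIntegral.integral_comp_neg (a := (0:ℝ)) (b := x) (fun y => Real.exp y)
        rw [h, integral_exp]
        simp
      simp [this]
  | succ k ih =>
      have homega : omegaInc (k+1) x = omegaInc k x + Real.exp (-x) * (x ^ (k+1) / (Nat.factorial (k+1) : ℝ)) := by
        unfold omegaInc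
        rw [Finset.sum_range_succ]
        ring
      rw [sigma_succ, homega]
      have : x ^ (k + 1) * Real.exp (-x) / (Nat.factorial (k+1) : ℝ)
          = Real.exp (-x) * (x ^ (k+1) / (Nat.factorial (k+1) : ℝ)) := by ring
      rw [this]
      linarith [ih]


lemma sigma_nonneg (k : ℕ) {x : ℝ} (hx : 0 ≤ x) : 0 ≤ sigmaInc k x := by
  apply mul_nonneg (by positivity)
  apply intervalIntegral.integral_nonneg hx
  intro y hy
  exact mul_nonneg (pow_nonneg hy.1 k) (Real.exp_pos _).le

lemma omega_nonneg (k : ℕ) {x : ℝ} (hx : 0 ≤ x) : 0 ≤ omegaInc k x := by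
  apply mul_nonneg (Real.exp_pos _).le
  apply Finset.sum_nonneg
  intro s _
  exact div_nonneg (pow_nonneg hx s) (Nat.cast_nonneg _)

lemma omega_ge_exp (k : ℕ) {x : ℝ} (hx : 0 ≤ x) : Real.exp (-x) ≤ omegaInc k x := by
  unfold omegaInc
  nth_rewrite 1 [show Real.exp (-x) = Real.exp (-x) * 1 by ring]
  apply mul_le_mul_of_nonneg_left _ (Real.exp_pos _).le
  have h0 : (0:ℕ) ∈ Finset.range (k+1) := Finset.mem_range.2 (by omega)
  calc (1:ℝ) = x ^ 0 / (Nat.factorial 0 : ℝ) := by norm_num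
    _ ≤ ∑ s ∈ Finset.range (k + 1), x ^ s / (Nat.factorial s : ℝ) :=
        Finset.single_le_sum (fun s _ => div_nonneg (pow_nonneg hx s) (Nat.cast_nonneg _)) h0

lemma sigma_le_one (k : ℕ) {x : ℝ} (hx : 0 ≤ x) : sigmaInc k x ≤ 1 := by
  have h := sigma_add_omega k x
  have := omega_nonneg k hx
  linarith

lemma sigma_diff (k : ℕ) {c d : ℝ} :
    sigmaInc k d = sigmaInc k c + (1 / (Nat.factorial k : ℝ)) * ∫ y in c..d, y ^ k * Real.exp (-y) := by
  unfold sigmaInc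
  rw [← mul_add, intervalIntegral.integral_add_adjacent_intervals (intble_g k 0 c) (intble_g k c d)]

lemma int_lb_mono (k : ℕ) {c d : ℝ} (hc : 0 ≤ c) (hcd : c ≤ d) (hd : d ≤ (k:ℝ)) :
    (d - c) * (c ^ k * Real.exp (-c)) ≤ ∫ y in c..d, y ^ k * Real.exp (-y) := by
  have h := intervalIntegral.integral_mono_on hcd
    (intervalIntegrable_const (c := c ^ k * Real.exp (-c))) (intble_g k c d)
    (fun y hy => mono_g k hc hy.1 (hy.2.trans hd))
  rwa [intervalIntegral.integral_const, smul_eq_mul] at h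

lemma int_lb_anti (k : ℕ) {c d : ℝ} (hc : (k:ℝ) ≤ c) (hcd : c ≤ d) :
    (d - c) * (d ^ k * Real.exp (-d)) ≤ ∫ y in c..d, y ^ k * Real.exp (-y) := by
  have h := intervalIntegral.integral_mono_on hcd
    (intervalIntegrable_const (c := d ^ k * Real.exp (-d))) (intble_g k c d)
    (fun y hy => anti_g k (hc.trans hy.1) hy.2)
  rwa [intervalIntegral.integral_const, smul_eq_mul] at h

lemma P1 {u : ℝ} (h0 : 0 ≤ u) (h1 : u ≤ 1/2) : Real.exp (-u - 2*u^2) ≤ 1 - u := by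
  have hv0 : (0:ℝ) ≤ u + 2*u^2 := by positivity
  have he : (1 + (u + 2*u^2)/2)^2 ≤ Real.exp (u + 2*u^2) := by
    have h2 := Real.add_one_le_exp ((u + 2*u^2)/2)
    calc (1 + (u + 2*u^2)/2)^2 ≤ (Real.exp ((u + 2*u^2)/2))^2 := by
          nlinarith [Real.exp_pos ((u + 2*u^2)/2)]
      _ = Real.exp (u + 2*u^2) := by rw [sq, ← Real.exp_add]; ring_nf
  have hkey : 1 ≤ (1 - u) * Real.exp (u + 2*u^2) := by
    nlinarith [he, sq_nonneg u, sq_nonneg (1 - 2*u), mul_nonneg h0 h0,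
      mul_nonneg (mul_nonneg h0 h0) h0, mul_nonneg (mul_nonneg (mul_nonneg h0 h0) h0) h0]
  rw [show -u - 2*u^2 = -(u + 2*u^2) by ring, Real.exp_neg, inv_eq_one_div,
    div_le_iff₀ (Real.exp_pos _)]
  linarith

lemma P2 {u : ℝ} (h0 : 0 ≤ u) (h1 : u ≤ 1) : Real.exp (u - u^2) ≤ 1 + u := by
  have hexp : Real.exp u ≤ 1 + u + u^2 := by
    have h := Real.exp_bound' h0 h1 (n := 3) (by norm_num)
    norm_num [Finset.sum_range_succ, Nat.factorial] at h
    nlinarith [h, sq_nonneg u, mul_le_mul_of_nonneg_left h1 (sq_nonneg u)]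
  have hq : 1 + u^2 ≤ Real.exp (u^2) := by nlinarith [Real.add_one_le_exp (u^2)]
  have h2 : Real.exp (u - u^2) * (1 + u^2) ≤ Real.exp u := by
    calc Real.exp (u - u^2) * (1 + u^2) ≤ Real.exp (u - u^2) * Real.exp (u^2) :=
          mul_le_mul_of_nonneg_left hq (Real.exp_pos _).le
      _ = Real.exp u := by rw [← Real.exp_add]; ring_nf
  nlinarith [h2, hexp, Real.exp_pos (u - u^2), sq_nonneg u]


private lemma part_a : ∀ t : ℝ, 0 ≤ t → ∃ ε : ℝ, 0 < ε ∧ ∃ k₀ : ℕ, 0 < k₀ ∧ ∀ k : ℕ, k₀ ≤ k →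
    ε ≤ sigmaInc k ((k : ℝ) - t * Real.sqrt k) := by
  intro t ht
  set a := t + 1 with ha
  have ha1 : (1:ℝ) ≤ a := by simp [ha]; linarith
  have ha0 : (0:ℝ) < a := by linarith
  refine ⟨Real.exp (-(1 + 2*a^2)), Real.exp_pos _, max 1 ⌈4*a^2⌉₊,
    lt_of_lt_of_le one_pos (le_max_left _ _), ?_⟩
  intro k hk
  have hk1 : 1 ≤ k := le_trans (le_max_left _ _) hk
  have hk4 : 4*a^2 ≤ (k:ℝ) :=
    le_trans (Nat.le_ceil _) (Nat.cast_le.2 (le_trans (le_max_right _ _) hk))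
  have hk0 : (0:ℝ) < k := by
    have : (1:ℝ) ≤ (k:ℝ) := by exact_mod_cast hk1
    linarith
  set r := Real.sqrt (k:ℝ) with hr
  have hr2 : r^2 = (k:ℝ) := Real.sq_sqrt hk0.le
  have hr0 : 0 < r := Real.sqrt_pos.2 hk0
  have hra : 2*a ≤ r := by
    rw [hr, show (2*a) = Real.sqrt ((2*a)^2) from (Real.sqrt_sq (by positivity)).symm]
    apply Real.sqrt_le_sqrt
    nlinarith
  set y₀ := (k:ℝ) - a*r with hy₀
  set x := (k:ℝ) - t*r with hxdef
  have hy₀x : y₀ = x - r := by rw [hy₀, hxdef, ha]; ring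
  have hy₀0 : 0 < y₀ := by nlinarith
  have hxk : x ≤ (k:ℝ) := by nlinarith
  set u := a/r with hudef
  have hu0 : 0 < u := div_pos ha0 hr0
  have huh : u ≤ 1/2 := by rw [hudef, div_le_iff₀ hr0]; linarith
  have hP := P1 hu0.le huh
  have hy₀u : y₀ = (k:ℝ)*(1-u) := by
    rw [hy₀, hudef, ← hr2]
    field_simp
  have hexp_k : Real.exp (-u - 2*u^2) ^ k = Real.exp (-(a*r) - 2*a^2) := by
    rw [← Real.exp_nat_mul]
    congr 1
    rw [hudef, ← hr2]
    field_simp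
  have hgy₀ : (k:ℝ)^k * Real.exp (-(k:ℝ)) * Real.exp (-(2*a^2)) ≤ y₀^k * Real.exp (-y₀) := by
    have h1 : (k:ℝ) * Real.exp (-u - 2*u^2) ≤ y₀ := by
      rw [hy₀u]
      exact mul_le_mul_of_nonneg_left hP hk0.le
    have h2 : ((k:ℝ) * Real.exp (-u - 2*u^2))^k ≤ y₀^k :=
      pow_le_pow_left₀ (by positivity) h1 k
    rw [mul_pow, hexp_k] at h2
    have h3 : Real.exp (-y₀) = Real.exp (-(k:ℝ)) * Real.exp (a*r) := by
      rw [← Real.exp_add]; congr 1; rw [hy₀]; ring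
    have e1 : Real.exp (-(a*r) - 2*a^2) * (Real.exp (-(k:ℝ)) * Real.exp (a*r))
        = Real.exp (-(k:ℝ)) * Real.exp (-(2*a^2)) := by
      rw [← Real.exp_add, ← Real.exp_add, ← Real.exp_add]
      congr 1
      ring
    calc (k:ℝ)^k * Real.exp (-(k:ℝ)) * Real.exp (-(2*a^2))
        = ((k:ℝ)^k * Real.exp (-(a*r) - 2*a^2)) * (Real.exp (-(k:ℝ)) * Real.exp (a*r)) := by
          rw [mul_assoc, ← e1]; ring
      _ ≤ y₀^k * (Real.exp (-(k:ℝ)) * Real.exp (a*r)) :=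
          mul_le_mul_of_nonneg_right h2 (by positivity)
      _ = y₀^k * Real.exp (-y₀) := by rw [h3]
  have hfpos : (0:ℝ) < (Nat.factorial k : ℝ) := by positivity
  have hσ1 : (1/(Nat.factorial k:ℝ)) * (r * (y₀^k * Real.exp (-y₀))) ≤ sigmaInc k x := by
    rw [sigma_diff k (c := y₀) (d := x)]
    have h1 := int_lb_mono k hy₀0.le (by rw [hy₀x]; linarith : y₀ ≤ x) hxk
    rw [show x - y₀ = r by rw [hy₀x]; ring] at h1
    have hσ0 := sigma_nonneg k hy₀0.le
    have h2 := mul_le_mul_of_nonneg_left h1 (by positivity : (0:ℝ) ≤ 1/(Nat.factorial k:ℝ))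
    linarith
  have hst := stirling_ub k hk1
  rw [← hr] at hst
  calc Real.exp (-(1 + 2*a^2))
      = (r * ((k:ℝ)^k * Real.exp (-(k:ℝ)) * Real.exp (-(2*a^2))))
        / (Real.exp 1 * r * ((k:ℝ)^k * Real.exp (-(k:ℝ)))) := by
        rw [eq_div_iff (by positivity)]
        have e2 : Real.exp (-(1+2*a^2)) * Real.exp 1 * Real.exp (-(k:ℝ))
            = Real.exp (-(k:ℝ)) * Real.exp (-(2*a^2)) := by
          rw [← Real.exp_add, ← Real.exp_add, ← Real.exp_add]
          congr 1
          ring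
        linear_combination (r * (k:ℝ)^k) * e2
    _ ≤ (r * ((k:ℝ)^k * Real.exp (-(k:ℝ)) * Real.exp (-(2*a^2)))) / (Nat.factorial k : ℝ) :=
        div_le_div_of_nonneg_left (by positivity) hfpos hst
    _ = (1/(Nat.factorial k:ℝ)) * (r * ((k:ℝ)^k * Real.exp (-(k:ℝ)) * Real.exp (-(2*a^2)))) := by
        ring
    _ ≤ (1/(Nat.factorial k:ℝ)) * (r * (y₀^k * Real.exp (-y₀))) := by
        apply mul_le_mul_of_nonneg_left _ (by positivity)
        exact mul_le_mul_of_nonneg_left hgy₀ hr0.le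
    _ ≤ sigmaInc k x := hσ1

private lemma part_b : ∀ t : ℝ, 0 ≤ t → ∃ ε : ℝ, 0 < ε ∧ ∀ k : ℕ,
    ε ≤ omegaInc k ((k : ℝ) + t * Real.sqrt k) := by
  intro t ht
  set a := t + 1 with ha
  have ha1 : (1:ℝ) ≤ a := by simp [ha]; linarith
  have ha0 : (0:ℝ) < a := by linarith
  set K := max 1 ⌈a^2⌉₊ with hK
  refine ⟨min (Real.exp (-(1 + a^2))) (Real.exp (-((K:ℝ) + t * Real.sqrt K))),
    lt_min (Real.exp_pos _) (Real.exp_pos _), ?_⟩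
  intro k
  by_cases hk : k < K
  · -- small k
    have hxnn : (0:ℝ) ≤ (k:ℝ) + t * Real.sqrt k := by positivity
    have h1 := omega_ge_exp k hxnn
    have hkK : (k:ℝ) ≤ (K:ℝ) := by exact_mod_cast hk.le
    have h2 : (k:ℝ) + t*Real.sqrt k ≤ (K:ℝ) + t*Real.sqrt K := by
      have := Real.sqrt_le_sqrt hkK
      nlinarith
    calc min (Real.exp (-(1 + a^2))) (Real.exp (-((K:ℝ) + t * Real.sqrt K)))
        ≤ Real.exp (-((K:ℝ) + t * Real.sqrt K)) := min_le_right _ _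
      _ ≤ Real.exp (-((k:ℝ) + t * Real.sqrt k)) := Real.exp_le_exp.2 (by linarith)
      _ ≤ omegaInc k ((k:ℝ) + t * Real.sqrt k) := h1
  · push_neg at hk
    have hk1 : 1 ≤ k := le_trans (le_max_left _ _) hk
    have hka : a^2 ≤ (k:ℝ) :=
      le_trans (Nat.le_ceil _) (Nat.cast_le.2 (le_trans (le_max_right _ _) hk))
    have hk0 : (0:ℝ) < k := by
      have : (1:ℝ) ≤ (k:ℝ) := by exact_mod_cast hk1
      linarith
    set r := Real.sqrt (k:ℝ) with hr
    have hr2 : r^2 = (k:ℝ) := Real.sq_sqrt hk0.le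
    have hr0 : 0 < r := Real.sqrt_pos.2 hk0
    have hra : a ≤ r := by
      rw [hr, show a = Real.sqrt (a^2) from (Real.sqrt_sq ha0.le).symm]
      exact Real.sqrt_le_sqrt hka
    set b := (k:ℝ) + t*r with hb
    set b' := (k:ℝ) + a*r with hb'def
    have hb'b : b' = b + r := by rw [hb'def, hb, ha]; ring
    have hb0 : (0:ℝ) ≤ b := by positivity
    have hbb' : b ≤ b' := by rw [hb'b]; linarith
    have hkb : (k:ℝ) ≤ b := by nlinarith
    set u := a/r with hudef
    have hu0 : 0 < u := div_pos ha0 hr0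
    have hu1 : u ≤ 1 := by rw [hudef, div_le_one hr0]; linarith
    have hP := P2 hu0.le hu1
    have hb'u : b' = (k:ℝ)*(1+u) := by
      rw [hb'def, hudef, ← hr2]
      field_simp
    have hexp_k : Real.exp (u - u^2) ^ k = Real.exp (a*r - a^2) := by
      rw [← Real.exp_nat_mul]
      congr 1
      rw [hudef, ← hr2]
      field_simp
    have hgb' : (k:ℝ)^k * Real.exp (-(k:ℝ)) * Real.exp (-(a^2)) ≤ b'^k * Real.exp (-b') := by
      have h1 : (k:ℝ) * Real.exp (u - u^2) ≤ b' := by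
        rw [hb'u]
        exact mul_le_mul_of_nonneg_left hP hk0.le
      have h2 : ((k:ℝ) * Real.exp (u - u^2))^k ≤ b'^k :=
        pow_le_pow_left₀ (by positivity) h1 k
      rw [mul_pow, hexp_k] at h2
      have h3 : Real.exp (-b') = Real.exp (-(k:ℝ)) * Real.exp (-(a*r)) := by
        rw [← Real.exp_add]; congr 1; rw [hb'def]; ring
      have e1 : Real.exp (a*r - a^2) * (Real.exp (-(k:ℝ)) * Real.exp (-(a*r)))
          = Real.exp (-(k:ℝ)) * Real.exp (-(a^2)) := by
        rw [← Real.exp_add, ← Real.exp_add, ← Real.exp_add]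
        congr 1
        ring
      calc (k:ℝ)^k * Real.exp (-(k:ℝ)) * Real.exp (-(a^2))
          = ((k:ℝ)^k * Real.exp (a*r - a^2)) * (Real.exp (-(k:ℝ)) * Real.exp (-(a*r))) := by
            rw [mul_assoc, ← e1]; ring
        _ ≤ b'^k * (Real.exp (-(k:ℝ)) * Real.exp (-(a*r))) :=
            mul_le_mul_of_nonneg_right h2 (by positivity)
        _ = b'^k * Real.exp (-b') := by rw [h3]
    have hfpos : (0:ℝ) < (Nat.factorial k : ℝ) := by positivity
    have hω : (1/(Nat.factorial k:ℝ)) * (r * (b'^k * Real.exp (-b'))) ≤ omegaInc k b := by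
      have hid := sigma_add_omega k b
      have hle1 := sigma_le_one k (le_trans hb0 hbb')
      have hd := sigma_diff k (c := b) (d := b')
      have hint := int_lb_anti k hkb hbb'
      rw [show b' - b = r by rw [hb'b]; ring] at hint
      have h2 := mul_le_mul_of_nonneg_left hint
        (by positivity : (0:ℝ) ≤ 1/(Nat.factorial k:ℝ))
      linarith
    have hst := stirling_ub k hk1
    rw [← hr] at hst
    calc min (Real.exp (-(1 + a^2))) (Real.exp (-((K:ℝ) + t * Real.sqrt K)))
        ≤ Real.exp (-(1 + a^2)) := min_le_left _ _
      _ = (r * ((k:ℝ)^k * Real.exp (-(k:ℝ)) * Real.exp (-(a^2))))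
          / (Real.exp 1 * r * ((k:ℝ)^k * Real.exp (-(k:ℝ)))) := by
          rw [eq_div_iff (by positivity)]
          have e2 : Real.exp (-(1+a^2)) * Real.exp 1 * Real.exp (-(k:ℝ))
              = Real.exp (-(k:ℝ)) * Real.exp (-(a^2)) := by
            rw [← Real.exp_add, ← Real.exp_add, ← Real.exp_add]
            congr 1
            ring
          linear_combination (r * (k:ℝ)^k) * e2
      _ ≤ (r * ((k:ℝ)^k * Real.exp (-(k:ℝ)) * Real.exp (-(a^2)))) / (Nat.factorial k : ℝ) :=
          div_le_div_of_nonneg_left (by positivity) hfpos hst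
      _ = (1/(Nat.factorial k:ℝ)) * (r * ((k:ℝ)^k * Real.exp (-(k:ℝ)) * Real.exp (-(a^2)))) := by
          ring
      _ ≤ (1/(Nat.factorial k:ℝ)) * (r * (b'^k * Real.exp (-b'))) := by
          apply mul_le_mul_of_nonneg_left _ (by positivity)
          exact mul_le_mul_of_nonneg_left hgb' hr0.le
      _ ≤ omegaInc k ((k:ℝ) + t * Real.sqrt (k:ℝ)) := hω

private lemma part_c : ∀ ε : ℝ, 0 < ε → ∃ t : ℝ, 0 < t ∧ ∀ (k : ℕ) (m : ℝ),
    t ^ 2 ≤ (k : ℝ) → t ^ 2 ≤ m → m ≤ (k : ℝ) →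
    sigmaInc k (m - t * Real.sqrt m) ≤ ε * sigmaInc k m := by
  intro ε hε
  refine ⟨max 1 (1/ε), lt_of_lt_of_le one_pos (le_max_left _ _), ?_⟩
  set t := max 1 (1/ε) with hT
  intro k m hk hm hmk
  have ht1 : 1 ≤ t := le_max_left _ _
  have htε : 1/ε ≤ t := le_max_right _ _
  have ht0 : 0 < t := lt_of_lt_of_le one_pos ht1
  have hεt : 1/t ≤ ε := by
    rw [div_le_iff₀ ht0]
    calc (1:ℝ) = ε * (1/ε) := by field_simp
      _ ≤ ε * t := by apply mul_le_mul_of_nonneg_left htε hε.le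
  have hm1 : (1:ℝ) ≤ m := le_trans (by nlinarith) hm
  set u := Real.sqrt m with hu
  have hu2 : u^2 = m := Real.sq_sqrt (by linarith)
  have hu0 : 0 < u := Real.sqrt_pos.2 (by linarith)
  have htu : t ≤ u := by
    rw [show t = Real.sqrt (t^2) from (Real.sqrt_sq ht0.le).symm]
    exact Real.sqrt_le_sqrt hm
  have hu1 : 1 ≤ u := le_trans ht1 htu
  set x := m - t * u with hx
  have hx0 : 0 ≤ x := by nlinarith
  have hεσ : 0 ≤ ε * sigmaInc k m := mul_nonneg hε.le (sigma_nonneg k (by linarith))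
  rcases eq_or_lt_of_le hx0 with hx0' | hx0'
  · have : sigmaInc k x = 0 := by
      unfold sigmaInc
      rw [← hx0']
      simp
    rw [this]
    exact hεσ
  -- main case
  have hmu0 : 0 ≤ m - u := by nlinarith
  have hmuk : m - u ≤ (k:ℝ) := by linarith
  have hfac : (0:ℝ) < 1/(Nat.factorial k:ℝ) := by positivity
  -- lower bound for sigmaInc k m
  have hlow : (1 / (Nat.factorial k:ℝ)) * (u * ((m-u)^k * Real.exp (-(m-u)))) ≤ sigmaInc k m := by
    have hsplit := sigma_diff k (c := m - u) (d := m)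
    have hint := int_lb_mono k hmu0 (by linarith : m - u ≤ m) hmk
    have hσ := sigma_nonneg k hmu0
    rw [hsplit]
    have h2 := mul_le_mul_of_nonneg_left hint hfac.le
    rw [show m - (m - u) = u by ring] at h2
    linarith
  -- upper bound for sigmaInc k x
  set lam := ((k:ℝ) - x)/x with hlam
  have hxk : x < (k:ℝ) := by nlinarith
  have hlam0 : 0 < lam := div_pos (by linarith) hx0'
  have hlamtu : t/u ≤ lam := by
    rw [hlam, div_le_div_iff₀ hu0 hx0']
    nlinarith
  have htu0 : 0 < t/u := div_pos ht0 hu0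
  have hinvlam : 1/lam ≤ u/t := by
    have h := one_div_le_one_div_of_le htu0 hlamtu
    rwa [one_div_div t u] at h
  have hgx : (0:ℝ) ≤ x^k * Real.exp (-x) := by positivity
  have hup : (∫ y in (0:ℝ)..x, y^k * Real.exp (-y)) ≤ (x^k * Real.exp (-x)) * (1/lam) := by
    have step1 : (∫ y in (0:ℝ)..x, y^k * Real.exp (-y))
        ≤ ∫ y in (0:ℝ)..x, x^k * Real.exp (-x) * Real.exp (lam * (y - x)) := by
      apply intervalIntegral.integral_mono_on hx0 (intble_g k 0 x)
        (Continuous.intervalIntegrable (by fun_prop) 0 x)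
      intro y hy
      exact key k hx0' hy.1
    have step2 : (∫ y in (0:ℝ)..x, x^k * Real.exp (-x) * Real.exp (lam * (y - x)))
        = (x^k * Real.exp (-x)) * ((1 - Real.exp (-(lam * x)))/lam) := by
      rw [intervalIntegral.integral_const_mul]
      congr 1
      have hF : ∀ y ∈ Set.uIcc (0:ℝ) x,
          HasDerivAt (fun y => Real.exp (lam*(y-x))/lam) (Real.exp (lam*(y-x))) y := by
        intro y _
        have h1 : HasDerivAt (fun y : ℝ => lam*(y-x)) lam y := by
          simpa using ((hasDerivAt_id y).sub_const x).const_mul lam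
        have h2 := (Real.hasDerivAt_exp (lam*(y-x))).comp y h1
        have h3 := h2.div_const lam
        rw [mul_div_assoc, div_self hlam0.ne', mul_one] at h3
        exact h3
      rw [intervalIntegral.integral_eq_sub_of_hasDerivAt hF
        (Continuous.intervalIntegrable (by fun_prop) 0 x)]
      rw [show lam*(x-x) = 0 by ring, show lam*((0:ℝ)-x) = -(lam*x) by ring, Real.exp_zero]
      ring
    have step3 : (1 - Real.exp (-(lam*x)))/lam ≤ 1/lam := by
      gcongr
      linarith [Real.exp_pos (-(lam*x))]
    calc (∫ y in (0:ℝ)..x, y^k * Real.exp (-y))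
        ≤ ∫ y in (0:ℝ)..x, x^k * Real.exp (-x) * Real.exp (lam * (y - x)) := step1
      _ = (x^k * Real.exp (-x)) * ((1 - Real.exp (-(lam * x)))/lam) := step2
      _ ≤ (x^k * Real.exp (-x)) * (1/lam) := mul_le_mul_of_nonneg_left step3 hgx
  -- combine
  have hmono : x^k * Real.exp (-x) ≤ (m-u)^k * Real.exp (-(m-u)) :=
    mono_g k hx0 (by nlinarith) hmuk
  calc sigmaInc k x
      = (1/(Nat.factorial k:ℝ)) * ∫ y in (0:ℝ)..x, y^k * Real.exp (-y) := rfl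
    _ ≤ (1/(Nat.factorial k:ℝ)) * ((x^k * Real.exp (-x)) * (1/lam)) :=
        mul_le_mul_of_nonneg_left hup hfac.le
    _ ≤ (1/(Nat.factorial k:ℝ)) * (((m-u)^k * Real.exp (-(m-u))) * (u/t)) := by
        apply mul_le_mul_of_nonneg_left _ hfac.le
        apply mul_le_mul hmono hinvlam (by positivity) (by positivity)
    _ = (1/t) * ((1/(Nat.factorial k:ℝ)) * (u * ((m-u)^k * Real.exp (-(m-u))))) := by
        ring
    _ ≤ (1/t) * sigmaInc k m := by
        apply mul_le_mul_of_nonneg_left hlow (by positivity)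
    _ ≤ ε * sigmaInc k m := by
        apply mul_le_mul_of_nonneg_right hεt (sigma_nonneg k (by linarith))

/-- Estimates on the incomplete gamma function:
(a) for every `t ≥ 0` there are `ε > 0`, `k₀` with `σ_k(k − t√k) ≥ ε` for `k ≥ k₀`;
(b) for every `t ≥ 0` there is `ε > 0` with `ω_k(k + t√k) ≥ ε` for all `k`;
(c) for every `ε > 0` there is `t > 0` such that `σ_k(m − t√m) ≤ ε σ_k(m)`
whenever `t² ≤ m ≤ k`. -/
theorem stmt16 :
    (∀ t : ℝ, 0 ≤ t → ∃ ε : ℝ, 0 < ε ∧ ∃ k₀ : ℕ, 0 < k₀ ∧ ∀ k : ℕ, k₀ ≤ k →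
      ε ≤ sigmaInc k ((k : ℝ) - t * Real.sqrt k)) ∧
    (∀ t : ℝ, 0 ≤ t → ∃ ε : ℝ, 0 < ε ∧ ∀ k : ℕ,
      ε ≤ omegaInc k ((k : ℝ) + t * Real.sqrt k)) ∧
    (∀ ε : ℝ, 0 < ε → ∃ t : ℝ, 0 < t ∧ ∀ (k : ℕ) (m : ℝ),
      t ^ 2 ≤ (k : ℝ) → t ^ 2 ≤ m → m ≤ (k : ℝ) →
      sigmaInc k (m - t * Real.sqrt m) ≤ ε * sigmaInc k m) := by
  exact ⟨part_a, part_b, part_c⟩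

end
end

section
/- Let δ > 0, let m ≥ 1 be an integer, and set R = √m + δ. If f is a function analytic on the disc D(R) and continuous up to its boundary, satisfying f(0) = f'(0) = ... = f^{(m−1)}(0) = 0 and |f(R e^{it})| ≤ e^{R²/2} for all t ∈ [0, 2π], then |f(z)| ≤ e^{δ²} e^{|z|²/2} for all |z| ≤ R. -/
open Metric Set Function

/-- Key elementary inequality: `exp (x - x²/2) ≤ 1 + x` for `x ≥ 0`. -/
lemma aux_exp_le_one_add (x : ℝ) (hx : 0 ≤ x) : Real.exp (x - x ^ 2 / 2) ≤ 1 + x := by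
  set F : ℝ → ℝ := fun y => (1 + y) * Real.exp (y ^ 2 / 2 - y) with hFdef
  have hd : ∀ y : ℝ, HasDerivAt F (y ^ 2 * Real.exp (y ^ 2 / 2 - y)) y := by
    intro y
    have h1 : HasDerivAt (fun y : ℝ => 1 + y) 1 y := (hasDerivAt_id y).const_add 1
    have h2 : HasDerivAt (fun y : ℝ => y ^ 2 / 2 - y) (y - 1) y := by
      have := ((hasDerivAt_pow 2 y).div_const 2).sub (hasDerivAt_id' y)
      exact this.congr_deriv (by norm_num)
    have := h1.mul h2.exp
    exact this.congr_deriv (by ring)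
  have hmono : MonotoneOn F (Ici 0) := by
    refine monotoneOn_of_deriv_nonneg (convex_Ici 0) ?_ ?_ ?_
    · exact (Continuous.mul (by continuity) (by continuity)).continuousOn
    · intro y _
      exact (hd y).differentiableAt.differentiableWithinAt
    · intro y _
      rw [(hd y).deriv]
      positivity
  have h0 : F 0 ≤ F x := hmono self_mem_Ici hx hx
  have hF0 : F 0 = 1 := by simp [hFdef]
  rw [hF0] at h0
  have hmul : Real.exp (x ^ 2 / 2 - x) * Real.exp (x - x ^ 2 / 2) = 1 := by
    rw [← Real.exp_add]
    ring_nf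
    exact Real.exp_zero
  calc Real.exp (x - x ^ 2 / 2) = 1 * Real.exp (x - x ^ 2 / 2) := (one_mul _).symm
    _ ≤ ((1 + x) * Real.exp (x ^ 2 / 2 - x)) * Real.exp (x - x ^ 2 / 2) :=
        mul_le_mul_of_nonneg_right h0 (Real.exp_pos _).le
    _ = (1 + x) * (Real.exp (x ^ 2 / 2 - x) * Real.exp (x - x ^ 2 / 2)) := by ring
    _ = 1 + x := by rw [hmul, mul_one]

lemma aux_pow_bound (m : ℕ) (hm : 1 ≤ m) (t : ℝ) (ht : 0 ≤ t) :
    t ^ m ≤ (m : ℝ) ^ m * Real.exp (t - m) := by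
  have hm0 : (0 : ℝ) < m := by exact_mod_cast hm
  have h : t / m ≤ Real.exp (t / m - 1) := by
    have := Real.add_one_le_exp (t / m - 1)
    linarith
  have h2 := pow_le_pow_left₀ (by positivity) h m
  rw [div_pow, ← Real.exp_nat_mul] at h2
  have e : (m : ℝ) * (t / m - 1) = t - m := by field_simp
  rw [e] at h2
  calc t ^ m = (t ^ m / (m : ℝ) ^ m) * (m : ℝ) ^ m := by field_simp
    _ ≤ Real.exp (t - m) * (m : ℝ) ^ m := by
        exact mul_le_mul_of_nonneg_right h2 (by positivity)
    _ = (m : ℝ) ^ m * Real.exp (t - m) := by ring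

lemma aux_stepA (m : ℕ) (hm : 1 ≤ m) (r : ℝ) (hr : 0 ≤ r) :
    r ^ m ≤ Real.sqrt m ^ m * Real.exp (r ^ 2 / 2 - (m : ℝ) / 2) := by
  have hs : 0 ≤ Real.sqrt m := Real.sqrt_nonneg _
  have hs2 : Real.sqrt m ^ 2 = (m : ℝ) := Real.sq_sqrt (Nat.cast_nonneg m)
  have hcore : (r ^ 2) ^ m ≤ (m : ℝ) ^ m * Real.exp (r ^ 2 - m) :=
    aux_pow_bound m hm _ (sq_nonneg r)
  have hb : 0 ≤ Real.sqrt m ^ m * Real.exp (r ^ 2 / 2 - (m : ℝ) / 2) := by positivity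
  have hsq : (r ^ m) ^ 2 ≤ (Real.sqrt m ^ m * Real.exp (r ^ 2 / 2 - (m : ℝ) / 2)) ^ 2 := by
    have e1 : (r ^ m) ^ 2 = (r ^ 2) ^ m := by rw [← pow_mul, ← pow_mul, mul_comm]
    have e2 : (Real.sqrt m ^ m * Real.exp (r ^ 2 / 2 - (m : ℝ) / 2)) ^ 2
        = (m : ℝ) ^ m * Real.exp (r ^ 2 - m) := by
      rw [mul_pow, ← pow_mul, mul_comm m 2, pow_mul, hs2, sq, ← Real.exp_add]
      ring_nf
    rw [e1, e2]
    exact hcore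
  have := Real.sqrt_le_sqrt hsq
  rwa [Real.sqrt_sq (pow_nonneg hr m), Real.sqrt_sq hb] at this

lemma aux_stepB (m : ℕ) (hm : 1 ≤ m) (δ : ℝ) (hδ : 0 < δ) :
    Real.sqrt m ^ m * Real.exp (Real.sqrt m * δ - δ ^ 2 / 2) ≤ (Real.sqrt m + δ) ^ m := by
  have hm0 : (0 : ℝ) < m := by exact_mod_cast hm
  have hs : 0 < Real.sqrt m := Real.sqrt_pos.mpr hm0
  have hs2 : Real.sqrt m ^ 2 = (m : ℝ) := Real.sq_sqrt (Nat.cast_nonneg m)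
  have key := aux_exp_le_one_add (δ / Real.sqrt m) (by positivity)
  have h2 := pow_le_pow_left₀ (Real.exp_pos _).le key m
  rw [← Real.exp_nat_mul] at h2
  have e1 : (m : ℝ) * (δ / Real.sqrt m - (δ / Real.sqrt m) ^ 2 / 2)
      = Real.sqrt m * δ - δ ^ 2 / 2 := by
    set s := Real.sqrt m with hsdef
    rw [← hs2]
    field_simp
  rw [e1] at h2
  have e2 : (1 + δ / Real.sqrt m) ^ m = (Real.sqrt m + δ) ^ m / Real.sqrt m ^ m := by
    rw [← div_pow]
    congr 1
    field_simp
  rw [e2] at h2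
  have := (le_div_iff₀ (by positivity : (0:ℝ) < Real.sqrt m ^ m)).mp h2
  linarith [this]

lemma aux_real_final (m : ℕ) (hm : 1 ≤ m) (δ : ℝ) (hδ : 0 < δ) (R : ℝ)
    (hR : R = Real.sqrt m + δ) (r : ℝ) (hr : 0 ≤ r) :
    r ^ m * (Real.exp (R ^ 2 / 2) / R ^ m) ≤ Real.exp (δ ^ 2) * Real.exp (r ^ 2 / 2) := by
  have hm0 : (0 : ℝ) < m := by exact_mod_cast hm
  have hs : 0 < Real.sqrt m := Real.sqrt_pos.mpr hm0
  have hs2 : Real.sqrt m ^ 2 = (m : ℝ) := Real.sq_sqrt (Nat.cast_nonneg m)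
  have hR0 : 0 < R := by rw [hR]; positivity
  rw [mul_div_assoc', div_le_iff₀ (by positivity : (0:ℝ) < R ^ m)]
  calc r ^ m * Real.exp (R ^ 2 / 2)
      ≤ (Real.sqrt m ^ m * Real.exp (r ^ 2 / 2 - (m : ℝ) / 2)) * Real.exp (R ^ 2 / 2) :=
        mul_le_mul_of_nonneg_right (aux_stepA m hm r hr) (Real.exp_pos _).le
    _ = (Real.sqrt m ^ m * Real.exp (Real.sqrt m * δ - δ ^ 2 / 2))
          * Real.exp (δ ^ 2 + r ^ 2 / 2) := by
        rw [mul_assoc, mul_assoc, ← Real.exp_add, ← Real.exp_add]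
        congr 2
        set s := Real.sqrt m with hsdef
        rw [hR, ← hs2]
        ring
    _ ≤ (Real.sqrt m + δ) ^ m * Real.exp (δ ^ 2 + r ^ 2 / 2) :=
        mul_le_mul_of_nonneg_right (aux_stepB m hm δ hδ) (Real.exp_pos _).le
    _ = Real.exp (δ ^ 2) * Real.exp (r ^ 2 / 2) * R ^ m := by
        rw [← Real.exp_add, hR]; ring

/-- Factorization `f z = z ^ m * g z` with `g` analytic on the ball and continuous on the
closed ball. -/
lemma aux_factor (R : ℝ) (hR0 : 0 < R) :
    ∀ (m : ℕ) (f : ℂ → ℂ) (p : FormalMultilinearSeries ℂ ℂ ℂ),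
      HasFPowerSeriesAt f p 0 → DifferentiableOn ℂ f (ball (0:ℂ) R) →
      ContinuousOn f (closedBall (0:ℂ) R) → (∀ k < m, p.coeff k = 0) →
      ∃ g : ℂ → ℂ, DifferentiableOn ℂ g (ball (0:ℂ) R) ∧
        ContinuousOn g (closedBall (0:ℂ) R) ∧ ∀ z : ℂ, f z = z ^ m * g z := by
  intro m
  induction m with
  | zero =>
    intro f p _ hd hc _
    exact ⟨f, hd, hc, fun z => by simp⟩
  | succ m ih =>
    intro f p hp hd hc hvan
    have hf0 : f 0 = 0 := by
      have h0 := hp.coeff_zero (fun _ => (1:ℂ))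
      have := hvan 0 (Nat.succ_pos m)
      rw [← h0]
      exact this
    have hd1 : DifferentiableOn ℂ (dslope f 0) (ball (0:ℂ) R) :=
      (Complex.differentiableOn_dslope (ball_mem_nhds 0 hR0)).mpr hd
    have hc1 : ContinuousOn (dslope f 0) (closedBall (0:ℂ) R) := by
      intro x hx
      rcases eq_or_ne x 0 with rfl | hx0
      · exact (continuousAt_dslope_same.mpr
          (hd.differentiableAt (ball_mem_nhds 0 hR0))).continuousWithinAt
      · exact (continuousWithinAt_dslope_of_ne hx0).mpr (hc x hx)
    have hp1 : HasFPowerSeriesAt (dslope f 0) p.fslope 0 :=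
      hp.has_fpower_series_dslope_fslope
    have hvan1 : ∀ k < m, p.fslope.coeff k = 0 := fun k hk => by
      rw [FormalMultilinearSeries.coeff_fslope]
      exact hvan (k + 1) (by omega)
    obtain ⟨g, hgd, hgc, hgf⟩ := ih (dslope f 0) p.fslope hp1 hd1 hc1 hvan1
    refine ⟨g, hgd, hgc, fun z => ?_⟩
    have hzf : f z = z * dslope f 0 z := by
      rcases eq_or_ne z 0 with rfl | hz0
      · simp [hf0]
      · rw [dslope_of_ne f hz0, slope_def_field]
        field_simp [hf0]
        rw [hf0, sub_zero, sub_zero, mul_comm]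
    rw [hzf, hgf z, pow_succ]
    ring

/-- Let `δ > 0`, `m ≥ 1`, `R = √m + δ`. If `f` is analytic on `D(R)`, continuous up to
the boundary, vanishes at `0` to order at least `m`, and `|f| ≤ e^{R²/2}` on the circle
`|z| = R`, then `|f(z)| ≤ e^{δ²} e^{|z|²/2}` for all `|z| ≤ R`. -/
theorem stmt19 (δ : ℝ) (hδ : 0 < δ) (m : ℕ) (hm : 1 ≤ m) (R : ℝ)
    (hR : R = Real.sqrt m + δ) (f : ℂ → ℂ)
    (hanal : DifferentiableOn ℂ f (ball (0 : ℂ) R))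
    (hcont : ContinuousOn f (closedBall (0 : ℂ) R))
    (hvan : ∀ k < m, iteratedDeriv k f 0 = 0)
    (hbd : ∀ z : ℂ, ‖z‖ = R → ‖f z‖ ≤ Real.exp (R ^ 2 / 2)) :
    ∀ z : ℂ, ‖z‖ ≤ R →
      ‖f z‖ ≤ Real.exp (δ ^ 2) * Real.exp (‖z‖ ^ 2 / 2) := by
  intro z hz
  have hm0 : (0 : ℝ) < m := by exact_mod_cast hm
  have hR0 : 0 < R := by
    rw [hR]
    have := Real.sqrt_pos.mpr hm0
    linarith
  obtain ⟨p, hp⟩ := hanal.analyticAt (ball_mem_nhds 0 hR0)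
  have hvanc : ∀ k < m, p.coeff k = 0 := by
    intro k hk
    obtain ⟨r, hpr⟩ := hp
    have h1 := hpr.factorial_smul (y := (1:ℂ)) k
    have h2 : iteratedFDeriv ℂ k f 0 (fun _ => (1:ℂ)) = 0 := by
      rw [← iteratedDeriv_eq_iteratedFDeriv, hvan k hk]
    rw [h2] at h1
    have h3 : (k.factorial : ℂ) * p.coeff k = 0 := by
      have hc : p.coeff k = p k (fun _ => 1) := rfl
      rw [hc, ← nsmul_eq_mul]
      exact h1
    have h4 : (k.factorial : ℂ) ≠ 0 := Nat.cast_ne_zero.mpr (Nat.factorial_ne_zero k)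
    exact (mul_eq_zero.mp h3).resolve_left h4
  obtain ⟨g, hgd, hgc, hgf⟩ := aux_factor R hR0 m f p hp hanal hcont hvanc
  have hgb : ∀ w ∈ closedBall (0:ℂ) R, ‖g w‖ ≤ Real.exp (R ^ 2 / 2) / R ^ m := by
    intro w hw
    refine Complex.norm_le_of_forall_mem_frontier_norm_le isBounded_ball
      ⟨hgd, ?_⟩ ?_ ?_
    · rwa [closure_ball 0 hR0.ne']
    · intro x hx
      rw [frontier_ball 0 hR0.ne'] at hx
      have hxR : ‖x‖ = R := by
        simpa [Complex.dist_eq] using hx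
      have hfx := hbd x hxR
      have hfg : ‖f x‖ = R ^ m * ‖g x‖ := by
        rw [hgf x, norm_mul, norm_pow, hxR]
      rw [le_div_iff₀ (by positivity : (0:ℝ) < R ^ m)]
      calc ‖g x‖ * R ^ m = R ^ m * ‖g x‖ := by
            ring
        _ = ‖f x‖ := hfg.symm
        _ ≤ Real.exp (R ^ 2 / 2) := hfx
    · rwa [closure_ball 0 hR0.ne']
  have hzball : z ∈ closedBall (0:ℂ) R := by
    simpa [Complex.dist_eq] using hz
  have hfz : ‖f z‖ ≤ ‖z‖ ^ m * (Real.exp (R ^ 2 / 2) / R ^ m) := by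
    rw [hgf z, norm_mul, norm_pow]
    refine mul_le_mul_of_nonneg_left ?_ (by positivity)
    exact hgb z hzball
  exact hfz.trans (aux_real_final m hm δ hδ R hR (‖z‖) (norm_nonneg z))
end
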